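/- arXiv:1806.03955 — 3 statements merged into one kernel-verified Lean document; each statement's English description precedes it below -/
import Mathlib

section
/- Let I be an ideal of R = ℂ[x,y] such that n = dim_ℂ R/I is finite, and let k = dim_ℂ I/(𝔪·I). Then n ≥ k(k-1)/2. -/
open MvPolynomial

noncomputable section

/-- The polynomial ring `R = ℂ[x,y]`. -/
abbrev Rpoly : Type := MvPolynomial (Fin 2) ℂ

/-- The maximal ideal `𝔪 = ⟨x, y⟩` of `R` at the origin. -/
def mIdeal : Ideal Rpoly := Ideal.span {X 0, X 1}

/-- `μ(I) = dim_ℂ I/(𝔪·I)`, computed as the ℂ-dimension of the image of `I`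
in `R/(𝔪·I)` (this image is precisely `I/(𝔪·I)` since `𝔪·I ⊆ I`). -/
noncomputable def mu (I : Ideal Rpoly) : ℕ :=
  Module.finrank ℂ
    (Submodule.restrictScalars ℂ (I.map (Ideal.Quotient.mk (mIdeal * I))))

namespace Stmt0Aux

lemma deg2 (m : Fin 2 →₀ ℕ) : m.degree = m 0 + m 1 := by
  rw [Finsupp.degree_apply]
  rw [Finset.sum_subset (Finset.subset_univ m.support)
    (by intro i _ hi; simpa [Finsupp.mem_support_iff] using hi)]
  simp [Fin.sum_univ_two]

lemma fin2_decomp (m : Fin 2 →₀ ℕ) :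
    m = Finsupp.single 0 (m 0) + Finsupp.single 1 (m 1) := by
  ext i
  fin_cases i <;> simp [Finsupp.single_apply]

/-- Polynomials all of whose monomials have degree ≥ c, as an ideal. -/
def Dset (c : ℕ) : Ideal Rpoly where
  carrier := {f | ∀ m ∈ f.support, c ≤ m.degree}
  zero_mem' := by simp
  add_mem' := by
    intro a b ha hb m hm
    rcases Finset.mem_union.mp (MvPolynomial.support_add hm) with h | h
    · exact ha m h
    · exact hb m h
  smul_mem' := by
    intro r f hf m hm
    rw [smul_eq_mul] at hm
    rcases Finset.mem_add.mp (MvPolynomial.support_mul r f hm) with ⟨a, ha, b, hb, rfl⟩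
    calc c ≤ b.degree := hf b hb
    _ ≤ (a + b).degree := by simp [deg2, Finsupp.add_apply]; omega

lemma X_mem_mIdeal (i : Fin 2) : (X i : Rpoly) ∈ mIdeal := by
  apply Ideal.subset_span
  fin_cases i <;> simp

lemma mem_mIdeal_pow {t : ℕ} {f : Rpoly} :
    f ∈ mIdeal ^ t ↔ ∀ m ∈ f.support, t ≤ m.degree := by
  constructor
  · intro hf
    have key : ∀ t : ℕ, mIdeal ^ t ≤ Dset t := by
      intro t
      induction t with
      | zero => intro f _ m _; exact Nat.zero_le _
      | succ t ih =>
        rw [pow_succ, Ideal.mul_le]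
        intro a ha b hb m hm
        rcases Finset.mem_add.mp (MvPolynomial.support_mul a b hm) with ⟨u, hu, v, hv, rfl⟩
        have h1 : t ≤ u.degree := ih ha u hu
        have h2 : 1 ≤ v.degree := by
          have : mIdeal ≤ Dset 1 := by
            rw [mIdeal, Ideal.span_le]
            rintro g hg
            rcases hg with rfl | rfl <;>
            · intro m hm
              rw [MvPolynomial.support_X] at hm
              simp only [Finset.mem_singleton] at hm
              subst hm
              simp [deg2, Finsupp.single_apply]
          exact this hb v hv
        simp only [deg2, Finsupp.add_apply] at h1 h2 ⊢
        omega
    exact key t hf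
  · intro h
    rw [← MvPolynomial.support_sum_monomial_coeff f]
    apply Ideal.sum_mem
    intro m hm
    have hdeg : t ≤ m 0 + m 1 := by rw [← deg2]; exact h m hm
    have : (monomial m (MvPolynomial.coeff m f) : Rpoly)
        = C (MvPolynomial.coeff m f) * (X 0 ^ (m 0) * X 1 ^ (m 1)) := by
      rw [mul_comm (X 0 ^ (m 0)) (X 1 ^ (m 1)), X_pow_eq_monomial, X_pow_eq_monomial,
        monomial_mul, C_mul_monomial, mul_one, add_comm, ← fin2_decomp]
      rw [mul_one]
    rw [this]
    apply Ideal.mul_mem_left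
    have hmem : (X 0 ^ (m 0) * X 1 ^ (m 1) : Rpoly) ∈ mIdeal ^ (m 0 + m 1) := by
      rw [pow_add]
      exact Ideal.mul_mem_mul (Ideal.pow_mem_pow (X_mem_mIdeal 0) _)
        (Ideal.pow_mem_pow (X_mem_mIdeal 1) _)
    exact Ideal.pow_le_pow_right hdeg hmem

lemma hc_eq_zero_of_mem {t d : ℕ} {f : Rpoly} (hf : f ∈ mIdeal ^ t) (hd : d < t) :
    homogeneousComponent d f = 0 := by
  apply MvPolynomial.homogeneousComponent_eq_zero'
  intro m hm
  have := mem_mIdeal_pow.mp hf m hm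
  omega

lemma mem_pow_of_hc {t : ℕ} {f : Rpoly} (h : ∀ d < t, homogeneousComponent d f = 0) :
    f ∈ mIdeal ^ t := by
  rw [mem_mIdeal_pow]
  intro m hm
  by_contra hlt
  push_neg at hlt
  have h0 := h m.degree hlt
  have : MvPolynomial.coeff m (homogeneousComponent m.degree f) = MvPolynomial.coeff m f := by
    rw [MvPolynomial.coeff_homogeneousComponent, if_pos rfl]
  rw [h0] at this
  simp only [MvPolynomial.coeff_zero] at this
  exact (MvPolynomial.mem_support_iff.mp hm) this.symm

lemma mem_pow_succ {t : ℕ} {f : Rpoly} (hf : f ∈ mIdeal ^ t)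
    (h0 : homogeneousComponent t f = 0) : f ∈ mIdeal ^ (t + 1) := by
  apply mem_pow_of_hc
  intro d hd
  rcases Nat.lt_succ_iff_lt_or_eq.mp hd with h | rfl
  · exact hc_eq_zero_of_mem hf h
  · exact h0

lemma exists_hc_ne_zero {f : Rpoly} (hf : f ≠ 0) : ∃ d, homogeneousComponent d f ≠ 0 := by
  by_contra h
  push_neg at h
  apply hf
  rw [← MvPolynomial.sum_homogeneousComponent f]
  exact Finset.sum_eq_zero fun i _ => h i

lemma hc_X_mul (i : Fin 2) (t : ℕ) (f : Rpoly) :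
    homogeneousComponent (t + 1) (X i * f) = X i * homogeneousComponent t f := by
  ext m
  rw [MvPolynomial.coeff_homogeneousComponent]
  rw [MvPolynomial.coeff_X_mul' m i f, MvPolynomial.coeff_X_mul' m i (homogeneousComponent t f)]
  by_cases hi : i ∈ m.support
  · rw [if_pos hi, if_pos hi, MvPolynomial.coeff_homogeneousComponent]
    have hmi : 1 ≤ m i := Nat.one_le_iff_ne_zero.mpr (Finsupp.mem_support_iff.mp hi)
    have hdeg : (m - Finsupp.single i 1).degree + 1 = m.degree := by
      have h0 : ∀ j : Fin 2, (m - Finsupp.single i 1 : Fin 2 →₀ ℕ) j = m j - (Finsupp.single i 1) j :=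
        fun j => Finsupp.tsub_apply m (Finsupp.single i 1) j
      rw [deg2, deg2, h0 0, h0 1]
      fin_cases i <;> simp_all [Finsupp.single_apply] <;> omega
    by_cases hd : m.degree = t + 1
    · rw [if_pos hd, if_pos (by omega)]
    · rw [if_neg hd, if_neg (by omega)]
  · rw [if_neg hi, if_neg hi, ite_self]
/-- `𝔪^t` as a `ℂ`-submodule. -/
def mp (t : ℕ) : Submodule ℂ Rpoly := (mIdeal ^ t).restrictScalars ℂ

/-- Space of `t`-th "leading forms" of elements of `J` of order `≥ t`. -/
def LF (J : Ideal Rpoly) (t : ℕ) : Submodule ℂ Rpoly :=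
  ((J.restrictScalars ℂ) ⊓ mp t).map (homogeneousComponent t)

/-- A finite set of monomials spanning forms of degree `t`. -/
def monos (t : ℕ) : Finset Rpoly :=
  (Finset.range (t + 1)).image
    (fun j => monomial (Finsupp.single (0 : Fin 2) j + Finsupp.single 1 (t - j)) (1 : ℂ))

def Hspan (t : ℕ) : Submodule ℂ Rpoly := Submodule.span ℂ (monos t : Set Rpoly)

instance Hspan_fd (t : ℕ) : FiniteDimensional ℂ (Hspan t) :=
  FiniteDimensional.span_finset ℂ (monos t)

lemma finrank_Hspan_le (t : ℕ) : Module.finrank ℂ (Hspan t) ≤ t + 1 := by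
  have h1 : Module.finrank ℂ (Hspan t) ≤ (monos t).card := finrank_span_finset_le_card (monos t)
  have h2 : (monos t).card ≤ t + 1 := by
    apply le_trans (Finset.card_image_le)
    simp
  omega

lemma homogeneous_mem_Hspan {t : ℕ} {f : Rpoly} (hf : f.IsHomogeneous t) : f ∈ Hspan t := by
  rw [← MvPolynomial.support_sum_monomial_coeff f]
  apply Submodule.sum_mem
  intro m hm
  have hdeg : m.degree = t := by
    rw [Finsupp.degree_eq_weight_one]
    exact hf (MvPolynomial.mem_support_iff.mp hm)
  have hsmul : (monomial m (MvPolynomial.coeff m f) : Rpoly)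
      = (MvPolynomial.coeff m f) • monomial m (1 : ℂ) := by
    rw [MvPolynomial.smul_monomial, smul_eq_mul, mul_one]
  rw [hsmul]
  apply Submodule.smul_mem
  apply Submodule.subset_span
  simp only [monos, Finset.coe_image, Set.mem_image, Finset.mem_coe, Finset.mem_range]
  refine ⟨m 0, by rw [deg2] at hdeg; omega, ?_⟩
  rw [deg2] at hdeg
  have : t - m 0 = m 1 := by omega
  rw [this, ← fin2_decomp]

lemma LF_le_Hspan (J : Ideal Rpoly) (t : ℕ) : LF J t ≤ Hspan t := by
  rintro x ⟨f, _, rfl⟩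
  exact homogeneous_mem_Hspan (MvPolynomial.homogeneousComponent_isHomogeneous t f)

instance LF_fd (J : Ideal Rpoly) (t : ℕ) : FiniteDimensional ℂ (LF J t) :=
  Submodule.finiteDimensional_of_le (LF_le_Hspan J t)

/-- multiplication by `X i` as a `ℂ`-linear map. -/
def mulX (i : Fin 2) : Rpoly →ₗ[ℂ] Rpoly := LinearMap.mulLeft ℂ (X i)

lemma mulX_inj (i : Fin 2) : Function.Injective (mulX i) := fun a b h => by
  simpa using mul_left_cancel₀ (MvPolynomial.X_ne_zero i) h

/-- Key dimension growth lemma: if `V ≠ 0` then `dim (X·V + Y·V) ≥ dim V + 1`. -/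
lemma grow_lemma (V W : Submodule ℂ Rpoly) [FiniteDimensional ℂ W] (hV : V ≠ ⊥)
    (hX : V.map (mulX 0) ≤ W) (hY : V.map (mulX 1) ≤ W) :
    Module.finrank ℂ V + 1 ≤ Module.finrank ℂ W := by
  obtain ⟨f0, hf0V, hf0⟩ := Submodule.exists_mem_ne_zero_of_ne_bot hV
  have hex : ∃ j, ∃ f, f ∈ V ∧ ∃ m ∈ f.support, m 0 = j := by
    obtain ⟨m, hm⟩ := Finset.nonempty_iff_ne_empty.mpr
      (fun h => hf0 (MvPolynomial.support_eq_empty.mp h))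
    exact ⟨m 0, f0, hf0V, m, hm, rfl⟩
  classical
  set j0 := Nat.find hex with hj0
  obtain ⟨fs, hfsV, ms, hms, hms0⟩ := Nat.find_spec hex
  -- `X 1 * fs ∉ (mulX 0) V`
  have hnotmem : (X 1 : Rpoly) * fs ∉ V.map (mulX 0) := by
    rintro ⟨g, hgV, hg⟩
    have hco : MvPolynomial.coeff (Finsupp.single 1 1 + ms) (X 1 * fs)
        = MvPolynomial.coeff ms fs := MvPolynomial.coeff_X_mul ms 1 fs
    have hne : MvPolynomial.coeff (Finsupp.single 1 1 + ms) (X 0 * g) ≠ 0 := by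
      have : mulX 0 g = X 0 * g := rfl
      rw [this] at hg
      rw [hg, hco]
      exact MvPolynomial.mem_support_iff.mp hms
    rw [MvPolynomial.coeff_X_mul'] at hne
    by_cases h0 : (0 : Fin 2) ∈ (Finsupp.single 1 1 + ms).support
    · rw [if_pos h0] at hne
      have hms0pos : 1 ≤ ms 0 := by
        simp only [Finsupp.mem_support_iff, Finsupp.add_apply,
          Finsupp.single_eq_of_ne' (show (1 : Fin 2) ≠ 0 by decide)] at h0
        omega
      set m'' := (Finsupp.single 1 1 + ms) - Finsupp.single 0 1 with hm''
      have hmem2 : m'' ∈ g.support := MvPolynomial.mem_support_iff.mpr hne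
      have hm''0 : m'' 0 = ms 0 - 1 := by
        rw [hm'']
        rw [Finsupp.tsub_apply, Finsupp.add_apply,
          Finsupp.single_eq_of_ne' (show (1 : Fin 2) ≠ 0 by decide), Finsupp.single_eq_same]
        omega
      have : ms 0 - 1 < j0 := by omega
      exact Nat.find_min hex this ⟨g, hgV, m'', hmem2, by omega⟩
    · rw [if_neg h0] at hne
      exact hne rfl
  -- strict growth
  set A := V.map (mulX 0) with hA
  have hfin : FiniteDimensional ℂ ↥(A ⊔ Submodule.span ℂ {(X 1 : Rpoly) * fs}) :=
    Submodule.finiteDimensional_of_le (sup_le hX (by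
      rw [Submodule.span_le, Set.singleton_subset_iff]
      exact hY ⟨fs, hfsV, rfl⟩))
  have hlt : A < A ⊔ Submodule.span ℂ {(X 1 : Rpoly) * fs} := by
    refine lt_of_le_of_ne le_sup_left (fun h => hnotmem ?_)
    rw [h]
    exact Submodule.mem_sup_right (Submodule.mem_span_singleton_self _)
  have h1 : Module.finrank ℂ A < Module.finrank ℂ ↥(A ⊔ Submodule.span ℂ {(X 1 : Rpoly) * fs}) :=
    Submodule.finrank_lt_finrank_of_lt hlt
  have h2 : Module.finrank ℂ ↥(A ⊔ Submodule.span ℂ {(X 1 : Rpoly) * fs}) ≤ Module.finrank ℂ W :=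
    Submodule.finrank_mono (sup_le hX (by
      rw [Submodule.span_le, Set.singleton_subset_iff]
      exact hY ⟨fs, hfsV, rfl⟩))
  have h3 : Module.finrank ℂ A = Module.finrank ℂ V :=
    (LinearEquiv.finrank_eq (Submodule.equivMapOfInjective (mulX 0) (mulX_inj 0) V)).symm
  omega
/-- Abstract bookkeeping lemma: if `a, b` are linear maps from a common source,
`C ≤ range b`, `A' ≤ range a`, `b x ∈ C → a x ∈ A'`, then
`dim range a + dim C ≤ dim A' + dim range b`. -/
lemma rank_step {M₁ M₂ M₃ : Type} [AddCommGroup M₁] [Module ℂ M₁]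
    [AddCommGroup M₂] [Module ℂ M₂] [AddCommGroup M₃] [Module ℂ M₃]
    (a : M₁ →ₗ[ℂ] M₂) (b : M₁ →ₗ[ℂ] M₃)
    (A' : Submodule ℂ M₂) (C : Submodule ℂ M₃)
    [FiniteDimensional ℂ (LinearMap.range a)] [FiniteDimensional ℂ (LinearMap.range b)]
    (hA' : A' ≤ LinearMap.range a) (hC : C ≤ LinearMap.range b)
    (h : ∀ x : M₁, b x ∈ C → a x ∈ A') :
    Module.finrank ℂ (LinearMap.range a) + Module.finrank ℂ C
      ≤ Module.finrank ℂ A' + Module.finrank ℂ (LinearMap.range b) := by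
  classical
  set A'c : Submodule ℂ (LinearMap.range a) := A'.comap (LinearMap.range a).subtype with hA'c
  set Cc : Submodule ℂ (LinearMap.range b) := C.comap (LinearMap.range b).subtype with hCc
  set u : M₁ →ₗ[ℂ] (LinearMap.range b ⧸ Cc) := Cc.mkQ.comp b.rangeRestrict with hu
  set w : M₁ →ₗ[ℂ] (LinearMap.range a ⧸ A'c) := A'c.mkQ.comp a.rangeRestrict with hw
  have hu_surj : Function.Surjective u :=
    (Cc.mkQ_surjective).comp b.surjective_rangeRestrict
  have hw_surj : Function.Surjective w :=
    (A'c.mkQ_surjective).comp a.surjective_rangeRestrict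
  have hker : LinearMap.ker u ≤ LinearMap.ker w := by
    intro x hx
    simp only [LinearMap.mem_ker, hu, LinearMap.comp_apply, Submodule.mkQ_apply,
      Submodule.Quotient.mk_eq_zero, Submodule.mem_comap, Submodule.coe_subtype] at hx
    simp only [LinearMap.mem_ker, hw, LinearMap.comp_apply, Submodule.mkQ_apply,
      Submodule.Quotient.mk_eq_zero, Submodule.mem_comap, Submodule.coe_subtype]
    exact h x hx
  -- lift w through the quotient by ker u
  set w' : (M₁ ⧸ LinearMap.ker u) →ₗ[ℂ] (LinearMap.range a ⧸ A'c) :=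
    Submodule.liftQ (LinearMap.ker u) w hker with hw'
  have hw'_surj : Function.Surjective w' := by
    intro y
    obtain ⟨x, rfl⟩ := hw_surj y
    exact ⟨Submodule.Quotient.mk x, rfl⟩
  have e : (M₁ ⧸ LinearMap.ker u) ≃ₗ[ℂ] (LinearMap.range b ⧸ Cc) :=
    u.quotKerEquivOfSurjective hu_surj
  haveI : FiniteDimensional ℂ (LinearMap.range b ⧸ Cc) := FiniteDimensional.finiteDimensional_quotient Cc
  haveI : FiniteDimensional ℂ (M₁ ⧸ LinearMap.ker u) :=
    Module.Finite.equiv e.symm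
  have hle : Module.finrank ℂ (LinearMap.range a ⧸ A'c)
      ≤ Module.finrank ℂ (M₁ ⧸ LinearMap.ker u) := by
    have := LinearMap.finrank_range_le w'
    rwa [LinearMap.range_eq_top.mpr hw'_surj, finrank_top] at this
  have heq : Module.finrank ℂ (M₁ ⧸ LinearMap.ker u)
      = Module.finrank ℂ (LinearMap.range b ⧸ Cc) := e.finrank_eq
  have hqa : Module.finrank ℂ (LinearMap.range a ⧸ A'c) + Module.finrank ℂ A'c
      = Module.finrank ℂ (LinearMap.range a) := Submodule.finrank_quotient_add_finrank A'c
  have hqb : Module.finrank ℂ (LinearMap.range b ⧸ Cc) + Module.finrank ℂ Cc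
      = Module.finrank ℂ (LinearMap.range b) := Submodule.finrank_quotient_add_finrank Cc
  have hA'eq : Module.finrank ℂ A'c = Module.finrank ℂ A' :=
    (Submodule.comapSubtypeEquivOfLe hA').finrank_eq
  have hCeq : Module.finrank ℂ Cc = Module.finrank ℂ C :=
    (Submodule.comapSubtypeEquivOfLe hC).finrank_eq
  omega
def mkL (I : Ideal Rpoly) : Rpoly →ₗ[ℂ] (Rpoly ⧸ (mIdeal * I)) :=
  (Ideal.Quotient.mkₐ ℂ (mIdeal * I)).toLinearMap

lemma mkL_apply (I : Ideal Rpoly) (f : Rpoly) :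
    mkL I f = Ideal.Quotient.mk (mIdeal * I) f := rfl

lemma mkL_eq_zero {I : Ideal Rpoly} {f : Rpoly} (hf : f ∈ mIdeal * I) : mkL I f = 0 := by
  rw [mkL_apply]
  exact Ideal.Quotient.eq_zero_iff_mem.mpr hf

/-- Image of `I ∩ 𝔪^t` in `R/(𝔪 I)`. -/
def Mt (I : Ideal Rpoly) (t : ℕ) : Submodule ℂ (Rpoly ⧸ (mIdeal * I)) :=
  ((I.restrictScalars ℂ) ⊓ mp t).map (mkL I)

lemma mp_zero : mp 0 = ⊤ := by
  rw [mp, pow_zero, Ideal.one_eq_top]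
  rfl

lemma const_diff_mem (r : Rpoly) : r - C (constantCoeff r) ∈ mIdeal := by
  have h : r - C (constantCoeff r) ∈ mIdeal ^ 1 := by
    rw [mem_mIdeal_pow]
    intro m hm
    rcases Nat.eq_zero_or_pos m.degree with h0 | h1
    · exfalso
      rw [Finsupp.degree_eq_zero_iff] at h0
      subst h0
      rw [MvPolynomial.mem_support_iff] at hm
      apply hm
      simp [MvPolynomial.coeff_sub, MvPolynomial.coeff_C, MvPolynomial.constantCoeff_eq]
    · exact h1
  rwa [pow_one] at h

lemma Mt_fd (I : Ideal Rpoly) (t : ℕ) : FiniteDimensional ℂ (Mt I t) := by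
  classical
  obtain ⟨s, hs⟩ := IsNoetherian.noetherian I
  have hle : Mt I t ≤ Submodule.span ℂ ((mkL I) '' ↑s) := by
    rintro y ⟨f, ⟨hfI, -⟩, rfl⟩
    have hfI' : f ∈ Submodule.span Rpoly (↑s : Set Rpoly) := by
      rw [hs]; exact hfI
    refine Submodule.span_induction ?_ ?_ ?_ ?_ hfI'
    · intro x hx
      exact Submodule.subset_span ⟨x, hx, rfl⟩
    · simp
    · intro x y _ _ hx hy
      rw [map_add]
      exact Submodule.add_mem _ hx hy
    · intro r x hxmem hx
      have hxI : x ∈ I := by rw [← hs]; exact hxmem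
      have hdecomp : r • x = C (constantCoeff r) * x + (r - C (constantCoeff r)) * x := by
        rw [smul_eq_mul]; ring
      have hz : mkL I ((r - C (constantCoeff r)) * x) = 0 :=
        mkL_eq_zero (Ideal.mul_mem_mul (const_diff_mem r) hxI)
      rw [hdecomp, map_add, hz, add_zero, ← MvPolynomial.smul_eq_C_mul, map_smul]
      exact Submodule.smul_mem _ _ hx
  haveI : FiniteDimensional ℂ (Submodule.span ℂ ((mkL I) '' ↑s)) :=
    FiniteDimensional.span_of_finite ℂ (s.finite_toSet.image _)
  exact Submodule.finiteDimensional_of_le hle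

lemma Mt_mono (I : Ideal Rpoly) {t t' : ℕ} (h : t ≤ t') : Mt I t' ≤ Mt I t := by
  apply Submodule.map_mono
  apply inf_le_inf_left
  exact fun x hx => Ideal.pow_le_pow_right h hx

lemma LF_mono (t : ℕ) {J J' : Ideal Rpoly} (h : J ≤ J') : LF J t ≤ LF J' t := by
  apply Submodule.map_mono
  apply inf_le_inf_right
  exact fun x hx => h hx

/-- The key step inequality. -/
lemma step_ineq (I : Ideal Rpoly) (t : ℕ) :
    Module.finrank ℂ (Mt I t) + Module.finrank ℂ (LF (mIdeal * I) t)
      ≤ Module.finrank ℂ (Mt I (t + 1)) + Module.finrank ℂ (LF I t) := by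
  classical
  set S := (I.restrictScalars ℂ) ⊓ mp t with hS
  set a : S →ₗ[ℂ] (Rpoly ⧸ (mIdeal * I)) := (mkL I).comp S.subtype with ha
  set b : S →ₗ[ℂ] Rpoly := (homogeneousComponent t).comp S.subtype with hb
  have hra : LinearMap.range a = Mt I t := by
    rw [ha, LinearMap.range_comp, Submodule.range_subtype]
    rfl
  have hrb : LinearMap.range b = LF I t := by
    rw [hb, LinearMap.range_comp, Submodule.range_subtype]
    rfl
  haveI : FiniteDimensional ℂ (LinearMap.range a) := by
    rw [hra]; exact Mt_fd I t
  haveI : FiniteDimensional ℂ (LinearMap.range b) := by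
    rw [hrb]; exact LF_fd I t
  have hA' : Mt I (t + 1) ≤ LinearMap.range a := by
    rw [hra]; exact Mt_mono I (Nat.le_succ t)
  have hC : LF (mIdeal * I) t ≤ LinearMap.range b := by
    rw [hrb]; exact LF_mono t Ideal.mul_le_right
  have h : ∀ x : S, b x ∈ LF (mIdeal * I) t → a x ∈ Mt I (t + 1) := by
    rintro ⟨x, hxI, hxt⟩ hbx
    obtain ⟨y, ⟨hyI, hyt⟩, hy⟩ := hbx
    have hy' : homogeneousComponent t y = homogeneousComponent t x := hy
    have hzt : x - y ∈ mIdeal ^ (t + 1) := by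
      apply mem_pow_succ (Ideal.sub_mem _ hxt hyt)
      rw [map_sub, hy', sub_self]
    have hzI : x - y ∈ I := Ideal.sub_mem I hxI (Ideal.mul_le_right hyI)
    have hax : a ⟨x, hxI, hxt⟩ = mkL I (x - y) := by
      have h0 : mkL I y = 0 := mkL_eq_zero hyI
      have h2 : a ⟨x, hxI, hxt⟩ = mkL I x := rfl
      rw [h2, map_sub, h0, sub_zero]
    rw [hax]
    exact ⟨x - y, ⟨hzI, hzt⟩, rfl⟩
  have := rank_step a b (Mt I (t + 1)) (LF (mIdeal * I) t) hA' hC h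
  rw [hra, hrb] at this
  exact this
lemma mulX_LF_le (I : Ideal Rpoly) (t : ℕ) (i : Fin 2) :
    (LF I t).map (mulX i) ≤ LF (mIdeal * I) (t + 1) := by
  rintro _ ⟨_, ⟨f, ⟨hfI, hft⟩, rfl⟩, rfl⟩
  have hmul : mulX i (homogeneousComponent t f) = homogeneousComponent (t + 1) (X i * f) :=
    (hc_X_mul i t f).symm
  rw [hmul]
  refine ⟨X i * f, ⟨?_, ?_⟩, rfl⟩
  · exact Ideal.mul_mem_mul (X_mem_mIdeal i) hfI
  · have : (X i : Rpoly) * f ∈ mIdeal * mIdeal ^ t := Ideal.mul_mem_mul (X_mem_mIdeal i) hft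
    have hp : mIdeal * mIdeal ^ t = mIdeal ^ (t + 1) := by
      rw [pow_succ, mul_comm]
    rw [hp] at this
    exact this

lemma LF_grow (I : Ideal Rpoly) (t : ℕ) (hne : LF I t ≠ ⊥) :
    Module.finrank ℂ (LF I t) + 1 ≤ Module.finrank ℂ (LF (mIdeal * I) (t + 1)) :=
  grow_lemma (LF I t) (LF (mIdeal * I) (t + 1)) hne (mulX_LF_le I t 0) (mulX_LF_le I t 1)

lemma LF_ne_bot_succ (I : Ideal Rpoly) (t : ℕ) (hne : LF I t ≠ ⊥) : LF I (t + 1) ≠ ⊥ := by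
  obtain ⟨x, hxmem, hx⟩ := Submodule.exists_mem_ne_zero_of_ne_bot hne
  have : mulX 0 x ∈ LF (mIdeal * I) (t + 1) := mulX_LF_le I t 0 ⟨x, hxmem, rfl⟩
  have hmem : mulX 0 x ∈ LF I (t + 1) := LF_mono (t + 1) Ideal.mul_le_right this
  intro hbot
  rw [hbot] at hmem
  have : mulX 0 x = 0 := hmem
  exact hx (by simpa using mulX_inj 0 (by simpa [map_zero] using this))

lemma LF_ne_bot_ge (I : Ideal Rpoly) {r t : ℕ} (hne : LF I r ≠ ⊥) (h : r ≤ t) :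
    LF I t ≠ ⊥ := by
  induction t with
  | zero => rwa [Nat.le_zero.mp h] at hne
  | succ t ih =>
    rcases Nat.lt_or_ge r (t + 1) with hlt | hge
    · exact LF_ne_bot_succ I t (ih (by omega))
    · rwa [le_antisymm h hge] at hne

/-- The main downward induction. -/
lemma main_induction (I : Ideal Rpoly) (r T : ℕ) (hrT : r + 1 ≤ T)
    (hbot : Mt I T = ⊥) (hne : LF I r ≠ ⊥) :
    ∀ j, j ≤ T - 1 - r →
      Module.finrank ℂ (Mt I (T - 1 - j)) + Module.finrank ℂ (LF (mIdeal * I) (T - 1 - j)) + j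
        ≤ Module.finrank ℂ (LF I (T - 1)) := by
  intro j
  induction j with
  | zero =>
    intro _
    have h := step_ineq I (T - 1)
    rw [show T - 1 + 1 = T by omega, hbot] at h
    simp only [Nat.sub_zero, finrank_bot, Nat.zero_add, Nat.add_zero] at h ⊢
    omega
  | succ j ih =>
    intro hj
    set t := T - 1 - (j + 1) with ht
    have htr : r ≤ t := by omega
    have hts : T - 1 - j = t + 1 := by omega
    have h1 := step_ineq I t
    have h2 : Module.finrank ℂ (LF I t) + 1
        ≤ Module.finrank ℂ (LF (mIdeal * I) (t + 1)) :=
      LF_grow I t (LF_ne_bot_ge I hne htr)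
    have h3 := ih (by omega)
    rw [hts] at h3
    omega
lemma artin_rees' (I : Ideal Rpoly) : ∃ k0 : ℕ, ∀ T : ℕ, k0 + 1 ≤ T →
    ∀ x ∈ I, x ∈ mIdeal ^ T → x ∈ mIdeal * I := by
  obtain ⟨k0, hk0⟩ := Ideal.exists_pow_inf_eq_pow_smul mIdeal (I : Submodule Rpoly Rpoly)
  refine ⟨k0, fun T hT x hxI hxT => ?_⟩
  have hmem : x ∈ mIdeal ^ T • (⊤ : Submodule Rpoly Rpoly) ⊓ I := by
    constructor
    · have : x • (1 : Rpoly) ∈ mIdeal ^ T • (⊤ : Submodule Rpoly Rpoly) :=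
        Submodule.smul_mem_smul hxT Submodule.mem_top
      simpa using this
    · exact hxI
  rw [hk0 T (by omega)] at hmem
  have h1 : mIdeal ^ (T - k0) • (mIdeal ^ k0 • (⊤ : Submodule Rpoly Rpoly) ⊓ I)
      ≤ mIdeal ^ (T - k0) • (I : Submodule Rpoly Rpoly) :=
    smul_mono_right _ inf_le_right
  have h2 : mIdeal ^ (T - k0) • (I : Submodule Rpoly Rpoly) ≤ mIdeal • I := by
    apply Submodule.smul_mono_left
    have : mIdeal ^ (T - k0) ≤ mIdeal ^ 1 := Ideal.pow_le_pow_right (by omega)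
    rwa [pow_one] at this
  have := h2 (h1 hmem)
  rwa [Ideal.smul_eq_mul] at this
lemma ord_exists {I : Ideal Rpoly} {f : Rpoly} (hf : f ∈ I) (h0 : f ≠ 0) :
    ∃ t, f ∈ mIdeal ^ t ∧ homogeneousComponent t f ≠ 0 ∧ LF I t ≠ ⊥ := by
  classical
  have hex := exists_hc_ne_zero h0
  set d := Nat.find hex with hd
  have hdne : homogeneousComponent d f ≠ 0 := Nat.find_spec hex
  have hmem : f ∈ mIdeal ^ d := by
    apply mem_pow_of_hc
    intro e he
    by_contra hne
    exact absurd (Nat.find_min' hex hne) (by omega)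
  refine ⟨d, hmem, hdne, ?_⟩
  rw [Submodule.ne_bot_iff]
  exact ⟨homogeneousComponent d f, ⟨f, ⟨hf, hmem⟩, rfl⟩, hdne⟩

lemma LF_exists {I : Ideal Rpoly} (hI : I ≠ ⊥) : ∃ t, LF I t ≠ ⊥ := by
  obtain ⟨f, hfI, hf0⟩ := Submodule.exists_mem_ne_zero_of_ne_bot hI
  obtain ⟨t, _, _, h⟩ := ord_exists hfI hf0
  exact ⟨t, h⟩

section MainArg
open scoped Classical

variable {I : Ideal Rpoly} (hI : I ≠ ⊥)

/-- The order of the ideal `I` at the origin. -/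
def rOrd (hI : I ≠ ⊥) : ℕ := Nat.find (LF_exists hI)

lemma rOrd_spec : LF I (rOrd hI) ≠ ⊥ := Nat.find_spec (LF_exists hI)

lemma le_rOrd_of_ne_bot {t : ℕ} (h : LF I t ≠ ⊥) : rOrd hI ≤ t := Nat.find_min' (LF_exists hI) h

lemma I_le_pow_rOrd : I ≤ mIdeal ^ (rOrd hI) := by
  intro f hf
  rcases eq_or_ne f 0 with rfl | h0
  · exact zero_mem _
  · obtain ⟨t, hmem, _, hne⟩ := ord_exists hf h0
    exact Ideal.pow_le_pow_right (le_rOrd_of_ne_bot hI hne) hmem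

lemma mu_eq_finrank_Mt : mu I = Module.finrank ℂ (Mt I (rOrd hI)) := by
  have h1 : Mt I (rOrd hI) = Mt I 0 := by
    unfold Mt
    congr 1
    rw [mp_zero, inf_top_eq]
    rw [inf_eq_left]
    intro x hx
    exact I_le_pow_rOrd hI hx
  have h2 : (Submodule.restrictScalars ℂ (I.map (Ideal.Quotient.mk (mIdeal * I)))) = Mt I 0 := by
    ext y
    rw [Submodule.restrictScalars_mem]
    rw [Ideal.mem_map_iff_of_surjective _ Ideal.Quotient.mk_surjective]
    constructor
    · rintro ⟨x, hx, rfl⟩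
      exact ⟨x, ⟨hx, by rw [mp_zero]; trivial⟩, rfl⟩
    · rintro ⟨x, ⟨hx, -⟩, rfl⟩
      exact ⟨x, hx, rfl⟩
  rw [mu, h2, h1]

lemma mu_le_rOrd_succ : mu I ≤ rOrd hI + 1 := by
  classical
  obtain ⟨k0, hk0⟩ := artin_rees' I
  set r := rOrd hI with hr
  set T := max (k0 + 1) (r + 1) with hT
  have hrT : r + 1 ≤ T := le_max_right _ _
  have hbot : Mt I T = ⊥ := by
    rw [Submodule.eq_bot_iff]
    rintro y ⟨x, ⟨hxI, hxT⟩, rfl⟩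
    exact mkL_eq_zero (hk0 T (le_max_left _ _) x hxI hxT)
  have hmain := main_induction I r T hrT hbot (rOrd_spec hI) (T - 1 - r) (le_refl _)
  have hre : T - 1 - (T - 1 - r) = r := by omega
  rw [hre] at hmain
  have hE : Module.finrank ℂ (LF I (T - 1)) ≤ T := by
    have h1 : Module.finrank ℂ (LF I (T - 1)) ≤ Module.finrank ℂ (Hspan (T - 1)) :=
      Submodule.finrank_mono (LF_le_Hspan I (T - 1))
    have h2 := finrank_Hspan_le (T - 1)
    omega
  rw [mu_eq_finrank_Mt hI, ← hr]
  omega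

end MainArg

lemma gdeg (a b : ℕ) : (Finsupp.single (0 : Fin 2) a + Finsupp.single 1 b).degree = a + b := by
  rw [deg2]
  simp [Finsupp.add_apply, Finsupp.single_apply]

section Colength
open scoped Classical

variable {I : Ideal Rpoly} (hI : I ≠ ⊥)

/-- Index set for monomials of degree `< r`. -/
def idxF (r : ℕ) : Finset ((_ : ℕ) × ℕ) := (Finset.range r).sigma (fun a => Finset.range (r - a))

lemma idxF_card (r : ℕ) : (idxF r).card = (r + 1) * r / 2 := by
  rw [idxF, Finset.card_sigma]
  simp only [Finset.card_range]
  have h1 : ∑ a ∈ Finset.range r, (r - a) = ∑ a ∈ Finset.range r, (a + 1) := by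
    have := Finset.sum_range_reflect (fun j => j + 1) r
    rw [← this]
    apply Finset.sum_congr rfl
    intro j hj
    rw [Finset.mem_range] at hj
    omega
  have h2 : ∑ a ∈ Finset.range r, (a + 1) = ∑ a ∈ Finset.range (r + 1), a := by
    rw [Finset.sum_range_succ' (fun a => a) r, add_zero]
  rw [h1, h2, Finset.sum_range_id]
  simp

/-- The monomial family of degree `< r`. -/
def vmon (r : ℕ) : {p // p ∈ idxF r} → Rpoly :=
  fun p => monomial (Finsupp.single (0 : Fin 2) p.1.1 + Finsupp.single 1 p.1.2) (1 : ℂ)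

lemma vmon_li (r : ℕ) : LinearIndependent ℂ (vmon r) := by
  have hginj : Function.Injective
      (fun p : {p // p ∈ idxF r} =>
        (Finsupp.single (0 : Fin 2) p.1.1 + Finsupp.single 1 p.1.2)) := by
    intro p q h
    have h' : (Finsupp.single (0 : Fin 2) p.1.1 + Finsupp.single 1 p.1.2)
        = Finsupp.single (0 : Fin 2) q.1.1 + Finsupp.single 1 q.1.2 := h
    have h0 : p.1.1 = q.1.1 := by
      have := DFunLike.congr_fun h' (0 : Fin 2)
      simpa [Finsupp.add_apply, Finsupp.single_apply] using this
    have h1 : p.1.2 = q.1.2 := by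
      have := DFunLike.congr_fun h' (1 : Fin 2)
      simpa [Finsupp.add_apply, Finsupp.single_apply] using this
    exact Subtype.ext (Sigma.ext h0 (heq_of_eq h1))
  have hli := (MvPolynomial.basisMonomials (Fin 2) ℂ).linearIndependent.comp _ hginj
  have : (⇑(MvPolynomial.basisMonomials (Fin 2) ℂ) ∘
      (fun p : {p // p ∈ idxF r} =>
        (Finsupp.single (0 : Fin 2) p.1.1 + Finsupp.single 1 p.1.2))) = vmon r := by
    funext p
    simp [MvPolynomial.coe_basisMonomials, vmon]
  rwa [this] at hli

lemma span_vmon_hc {r d : ℕ} (hd : r ≤ d) :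
    Submodule.span ℂ (Set.range (vmon r)) ≤ LinearMap.ker (homogeneousComponent d) := by
  rw [Submodule.span_le]
  rintro _ ⟨p, rfl⟩
  rw [SetLike.mem_coe, LinearMap.mem_ker]
  apply MvPolynomial.homogeneousComponent_eq_zero'
  intro m hm
  rw [show vmon r p = monomial (Finsupp.single (0 : Fin 2) p.1.1 + Finsupp.single 1 p.1.2)
    (1 : ℂ) from rfl] at hm
  rw [MvPolynomial.support_monomial, if_neg (one_ne_zero)] at hm
  rw [Finset.mem_singleton] at hm
  subst hm
  rw [gdeg]
  have h1 : p.1.1 < r := (Finset.mem_sigma.mp p.2).1 |> Finset.mem_range.mp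
  have h2 : p.1.2 < r - p.1.1 := (Finset.mem_sigma.mp p.2).2 |> Finset.mem_range.mp
  omega

def qL (I : Ideal Rpoly) : Rpoly →ₗ[ℂ] (Rpoly ⧸ I) := (Ideal.Quotient.mkₐ ℂ I).toLinearMap

lemma colength_ge (hfin : FiniteDimensional ℂ (Rpoly ⧸ I)) :
    (rOrd hI + 1) * (rOrd hI) / 2 ≤ Module.finrank ℂ (Rpoly ⧸ I) := by
  set r := rOrd hI with hr
  have hdisj : Disjoint (Submodule.span ℂ (Set.range (vmon r))) (LinearMap.ker (qL I)) := by
    rw [Submodule.disjoint_def]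
    intro x hxspan hxker
    by_contra hx0
    have hxI : x ∈ I := by
      have : qL I x = 0 := hxker
      exact Ideal.Quotient.eq_zero_iff_mem.mp this
    obtain ⟨t, _, hhc, hne⟩ := ord_exists hxI hx0
    have htr : r ≤ t := le_rOrd_of_ne_bot hI hne
    exact hhc (span_vmon_hc htr hxspan)
  have hli : LinearIndependent ℂ ((qL I) ∘ (vmon r)) := (vmon_li r).map hdisj
  have hcard := hli.fintype_card_le_finrank
  rw [Fintype.card_coe, idxF_card] at hcard
  exact hcard

end Colength

end Stmt0Aux

/-- If `I ⊴ ℂ[x,y]` has finite colength `n = dim_ℂ R/I` and `k = dim_ℂ I/(𝔪·I)`,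
then `n ≥ k(k-1)/2`. -/
theorem stmt0 (I : Ideal Rpoly) (n k : ℕ)
    (hfin : FiniteDimensional ℂ (Rpoly ⧸ I))
    (hn : Module.finrank ℂ (Rpoly ⧸ I) = n)
    (hk : mu I = k) :
    k * (k - 1) / 2 ≤ n := by
  subst hn
  subst hk
  by_cases hI : I = ⊥
  · subst hI
    have h0 : mu (⊥ : Ideal Rpoly) = 0 := by
      rw [mu, Ideal.map_bot, Submodule.restrictScalars_bot, finrank_bot]
    rw [h0]
    simp
  · have hk1 := Stmt0Aux.mu_le_rOrd_succ hI
    have hn1 := Stmt0Aux.colength_ge hI hfin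
    have hmul : mu I * (mu I - 1) ≤ (Stmt0Aux.rOrd hI + 1) * (Stmt0Aux.rOrd hI) :=
      Nat.mul_le_mul hk1 (by omega)
    calc mu I * (mu I - 1) / 2 ≤ (Stmt0Aux.rOrd hI + 1) * (Stmt0Aux.rOrd hI) / 2 :=
        Nat.div_le_div_right hmul
    _ ≤ Module.finrank ℂ (Rpoly ⧸ I) := hn1

end
end

section
/- Let I be an ideal of R = ℂ[x,y] such that n = dim_ℂ R/I is finite, and let k = dim_ℂ I/(𝔪·I). Then n = k(k-1)/2 if and only if I = 𝔪^{k-1}. -/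
open MvPolynomial

noncomputable section

lemma deg_eq (m : Fin 2 →₀ ℕ) : m.degree = m 0 + m 1 := by
  rw [Finsupp.degree_apply, Finset.sum_subset (Finset.subset_univ m.support)]
  · simp [Fin.sum_univ_two]
  · intro x _ hx; simpa using Finsupp.notMem_support_iff.mp hx

lemma deg_one_set : {m : Fin 2 →₀ ℕ | m 0 + m 1 = 1} =
    {Finsupp.single 0 1, Finsupp.single 1 1} := by
  ext m
  simp only [Set.mem_setOf_eq, Set.mem_insert_iff, Set.mem_singleton_iff]
  constructor
  · intro h
    rcases Nat.add_eq_one_iff.mp h with ⟨h0, h1⟩ | ⟨h0, h1⟩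
    · right; ext i; fin_cases i <;> simp [h0, h1]
    · left; ext i; fin_cases i <;> simp [h0, h1]
  · rintro (rfl | rfl) <;> simp

lemma mIdeal_eq_span : mIdeal =
    Ideal.span ((fun m => monomial m (1:ℂ)) '' {m | m 0 + m 1 = 1}) := by
  rw [deg_one_set, mIdeal]
  congr 1
  simp [Set.image_insert_eq, X]

lemma mpow_eq_span (j : ℕ) : mIdeal ^ j =
    Ideal.span ((fun m => monomial m (1:ℂ)) '' {m | m 0 + m 1 = j}) := by
  induction j with
  | zero =>
    have : {m : Fin 2 →₀ ℕ | m 0 + m 1 = 0} = {0} := by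
      ext m
      simp only [Set.mem_setOf_eq, Nat.add_eq_zero, Set.mem_singleton_iff]
      constructor
      · rintro ⟨h0, h1⟩; ext i; fin_cases i <;> simp [h0, h1]
      · rintro rfl; simp
    rw [pow_zero, this]
    have : ((fun m => monomial m (1:ℂ)) '' {(0 : Fin 2 →₀ ℕ)}) = {(1 : Rpoly)} := by
      simp
    rw [this, Ideal.span_singleton_one, Ideal.one_eq_top]
  | succ j ih =>
    rw [pow_succ, ih, mIdeal_eq_span, Ideal.span_mul_span]
    apply le_antisymm
    · rw [Ideal.span_le]
      intro f hf
      simp only [Set.mem_mul] at hf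
      obtain ⟨s, ⟨ms, hms, rfl⟩, t, ⟨mt, hmt, rfl⟩, rfl⟩ := hf
      rw [monomial_mul, mul_one]
      apply Ideal.subset_span
      exact ⟨ms + mt, by simp_all [Set.mem_setOf_eq, Finsupp.add_apply]; omega, rfl⟩
    · rw [Ideal.span_le]
      rintro f ⟨m, hm, rfl⟩
      simp only [Set.mem_setOf_eq] at hm
      have h : ∃ i : Fin 2, m i ≠ 0 := by
        by_contra h
        push_neg at h
        simp [h 0, h 1] at hm
      obtain ⟨i, hi⟩ := h
      have hle : Finsupp.single i 1 ≤ m := by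
        rw [Finsupp.single_le_iff]; omega
      have key : (monomial m (1:ℂ)) = monomial (m - Finsupp.single i 1) 1 * monomial (Finsupp.single i 1) 1 := by
        rw [monomial_mul, mul_one, tsub_add_cancel_of_le hle]
      show (monomial m (1:ℂ)) ∈ _
      rw [key]
      apply Ideal.subset_span
      simp only [Set.mem_mul]
      refine ⟨_, ⟨m - Finsupp.single i 1, ?_, rfl⟩, _, ⟨Finsupp.single i 1, ?_, rfl⟩, rfl⟩
      · simp only [Set.mem_setOf_eq, Finsupp.tsub_apply]
        have h1 : Finsupp.single i 1 0 + Finsupp.single i 1 1 = 1 := by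
          fin_cases i <;> simp
        have h2 := Finsupp.le_def.mp hle 0
        have h3 := Finsupp.le_def.mp hle 1
        omega
      · simp only [Set.mem_setOf_eq]
        fin_cases i <;> simp

lemma mem_mpow {f : Rpoly} {j : ℕ} :
    f ∈ mIdeal ^ j ↔ ∀ m ∈ f.support, j ≤ m 0 + m 1 := by
  rw [mpow_eq_span, mem_ideal_span_monomial_image]
  constructor
  · intro h m hm
    obtain ⟨m', hm', hle⟩ := h m hm
    have h0 := Finsupp.le_def.mp hle 0
    have h1 := Finsupp.le_def.mp hle 1
    simp only [Set.mem_setOf_eq] at hm'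
    omega
  · intro h m hm
    refine ⟨Finsupp.single 0 (min (m 0) j) + Finsupp.single 1 (j - min (m 0) j), ?_, ?_⟩
    · simp only [Set.mem_setOf_eq, Finsupp.add_apply]
      simp [Finsupp.single_apply]
    · have hj := h m hm
      rw [Finsupp.le_def]
      intro i
      fin_cases i <;> simp [Finsupp.single_apply] <;> omega

abbrev Hsub (d : ℕ) : Submodule ℂ Rpoly := homogeneousSubmodule (Fin 2) ℂ d

lemma mem_Hsub_support {h : Rpoly} {d : ℕ} (hh : h ∈ Hsub d) {m : Fin 2 →₀ ℕ}
    (hm : m ∈ h.support) : m 0 + m 1 = d := by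
  rw [← deg_eq, Finsupp.degree_eq_weight_one]
  exact (mem_homogeneousSubmodule _ _).mp hh (mem_support_iff.mp hm)

lemma Hsub_le_mpow (d : ℕ) : Hsub d ≤ (mIdeal ^ d).restrictScalars ℂ := by
  intro h hh
  rw [Submodule.restrictScalars_mem, mem_mpow]
  intro m hm
  exact (mem_Hsub_support hh hm).ge

lemma hc_eq_zero {f : Rpoly} {d : ℕ} (hf : f ∈ mIdeal ^ (d + 1)) :
    homogeneousComponent d f = 0 := by
  apply homogeneousComponent_eq_zero'
  intro m hm
  rw [deg_eq]
  have := mem_mpow.mp hf m hm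
  omega

lemma sub_hc_mem {f : Rpoly} {d : ℕ} (hf : f ∈ mIdeal ^ d) :
    f - homogeneousComponent d f ∈ mIdeal ^ (d + 1) := by
  rw [mem_mpow]
  intro m hm
  rw [mem_support_iff, coeff_sub, coeff_homogeneousComponent] at hm
  by_cases hd : m.degree = d
  · simp [hd] at hm
  · rw [if_neg hd, sub_zero] at hm
    have := mem_mpow.mp hf m (mem_support_iff.mpr hm)
    rw [deg_eq] at hd
    omega

lemma mem_succ_of_hc_zero {f : Rpoly} {d : ℕ} (hf : f ∈ mIdeal ^ d)
    (h0 : homogeneousComponent d f = 0) : f ∈ mIdeal ^ (d + 1) := by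
  have := sub_hc_mem hf
  rwa [h0, sub_zero] at this

lemma hc_mem_Hsub (d : ℕ) (f : Rpoly) : homogeneousComponent d f ∈ Hsub d :=
  homogeneousComponent_mem d f

lemma hc_of_mem_Hsub {h : Rpoly} {d : ℕ} (hh : h ∈ Hsub d) :
    homogeneousComponent d h = h := by
  rw [homogeneousComponent_of_mem hh, if_pos rfl]

def msingle (d : ℕ) (i : Fin (d + 1)) : Fin 2 →₀ ℕ :=
  Finsupp.single 0 (i : ℕ) + Finsupp.single 1 (d - (i : ℕ))

lemma msingle_injective (d : ℕ) : Function.Injective (msingle d) := by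
  intro i j hij
  have := congrArg (fun m => m 0) hij
  simp only [msingle, Finsupp.add_apply, Finsupp.single_apply] at this
  simp at this
  exact Fin.ext this

lemma Hsub_eq_span (d : ℕ) :
    Hsub d = Submodule.span ℂ (Set.range fun i : Fin (d+1) => (monomial (msingle d i) (1:ℂ))) := by
  apply le_antisymm
  · intro h hh
    rw [show h = ∑ m ∈ h.support, monomial m (coeff m h) from (as_sum h)]
    apply Submodule.sum_mem
    intro m hm
    have hdeg := mem_Hsub_support hh hm
    have hi : (m 0) < d + 1 := by omega
    have hmeq : m = msingle d ⟨m 0, hi⟩ := by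
      ext i
      fin_cases i <;> simp [msingle, Finsupp.single_apply] <;> omega
    rw [show (monomial m (coeff m h)) = coeff m h • monomial m 1 by
      rw [smul_monomial, smul_eq_mul, mul_one]]
    apply Submodule.smul_mem
    apply Submodule.subset_span
    exact ⟨⟨m 0, hi⟩, by simp only [← hmeq]⟩
  · rw [Submodule.span_le]
    rintro f ⟨i, rfl⟩
    rw [SetLike.mem_coe, mem_homogeneousSubmodule]
    apply isHomogeneous_monomial
    rw [deg_eq]
    simp [msingle, Finsupp.single_apply]
    omega

lemma li_monomials (d : ℕ) :
    LinearIndependent ℂ (fun i : Fin (d+1) => (monomial (msingle d i) (1:ℂ))) := by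
  have hb := (MvPolynomial.basisMonomials (Fin 2) ℂ).linearIndependent
  have := hb.comp (msingle d) (msingle_injective d)
  simp only [MvPolynomial.coe_basisMonomials] at this
  exact this

lemma finrank_Hsub (d : ℕ) : Module.finrank ℂ (Hsub d) = d + 1 := by
  rw [Hsub_eq_span, finrank_span_eq_card (li_monomials d)]
  simp

lemma Hsub_ne_bot (d : ℕ) : Hsub d ≠ ⊥ := by
  intro h
  have : Module.finrank ℂ (Hsub d) = 0 := by rw [h]; exact finrank_bot ℂ Rpoly
  rw [finrank_Hsub d] at this
  omega

instance Hsub_fd (d : ℕ) : FiniteDimensional ℂ (Hsub d) := by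
  rw [Hsub_eq_span d]
  exact FiniteDimensional.span_of_finite ℂ (Set.finite_range _)

def mulXL (i : Fin 2) : Rpoly →ₗ[ℂ] Rpoly := LinearMap.mulLeft ℂ (X i)

lemma mulXL_apply (i : Fin 2) (f : Rpoly) : mulXL i f = X i * f := rfl

lemma mulXL_inj (i : Fin 2) : Function.Injective (mulXL i) := by
  intro a b hab
  exact mul_left_cancel₀ (X_ne_zero i) hab

def nu (f : Rpoly) : ℕ := sInf {n | ∃ m ∈ f.support, m 0 = n}

lemma nu_le {f : Rpoly} {m : Fin 2 →₀ ℕ} (hm : m ∈ f.support) : nu f ≤ m 0 :=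
  Nat.sInf_le ⟨m, hm, rfl⟩

lemma exists_nu {f : Rpoly} (hf : f ≠ 0) : ∃ m ∈ f.support, m 0 = nu f := by
  have hne : {n | ∃ m ∈ f.support, m 0 = n}.Nonempty := by
    obtain ⟨m, hm⟩ := MvPolynomial.support_nonempty.mpr hf
    exact ⟨m 0, m, hm, rfl⟩
  exact Nat.sInf_mem hne

lemma mem_support_X_mul {i : Fin 2} {f : Rpoly} {m : Fin 2 →₀ ℕ} (hm : m ∈ f.support) :
    Finsupp.single i 1 + m ∈ (X i * f).support := by
  rw [support_X_mul]
  exact Finset.mem_map.mpr ⟨m, hm, rfl⟩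

lemma nu_X0_mul {f : Rpoly} (hf : f ≠ 0) : nu (X 0 * f) = nu f + 1 := by
  apply le_antisymm
  · obtain ⟨m, hm, hmn⟩ := exists_nu hf
    have := nu_le (mem_support_X_mul (i := 0) hm)
    simp only [Finsupp.add_apply, Finsupp.single_apply, hmn] at this
    simp at this
    omega
  · obtain ⟨m', hm', hmn⟩ := exists_nu (mul_ne_zero (X_ne_zero 0) hf)
    rw [support_X_mul] at hm'
    obtain ⟨m, hm, rfl⟩ := Finset.mem_map.mp hm'
    have h1 := nu_le hm
    simp only [addLeftEmbedding_apply, Finsupp.add_apply, Finsupp.single_apply] at hmn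
    simp at hmn
    omega

lemma nu_X1_mul {f : Rpoly} (hf : f ≠ 0) : nu (X 1 * f) = nu f := by
  apply le_antisymm
  · obtain ⟨m, hm, hmn⟩ := exists_nu hf
    have := nu_le (mem_support_X_mul (i := 1) hm)
    simpa [hmn] using this
  · obtain ⟨m', hm', hmn⟩ := exists_nu (mul_ne_zero (X_ne_zero 1) hf)
    rw [support_X_mul] at hm'
    obtain ⟨m, hm, rfl⟩ := Finset.mem_map.mp hm'
    have h1 := nu_le hm
    simp only [addLeftEmbedding_apply, Finsupp.add_apply, Finsupp.single_apply] at hmn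
    simp at hmn
    omega

lemma exists_eq_X_mul {i : Fin 2} {u : Rpoly} (h : ∀ m ∈ u.support, 1 ≤ m i) :
    ∃ w, u = X i * w := by
  have : u ∈ Ideal.span (MvPolynomial.X '' {i} : Set Rpoly) := by
    rw [mem_ideal_span_X_image]
    intro m hm
    exact ⟨i, rfl, by have := h m hm; omega⟩
  rw [Set.image_singleton, Ideal.mem_span_singleton'] at this
  obtain ⟨a, ha⟩ := this
  exact ⟨a, by rw [← ha]; ring⟩

lemma lemA (V : Submodule ℂ Rpoly) (hfd : FiniteDimensional ℂ V) (hV : V ≠ ⊥) :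
    Module.finrank ℂ V + 1 ≤ Module.finrank ℂ ↥(V.map (mulXL 0) ⊔ V.map (mulXL 1)) := by
  classical
  set V0 := V.map (mulXL 0) with hV0
  set V1 := V.map (mulXL 1) with hV1
  set V' := V.comap (mulXL 0) ⊓ V.comap (mulXL 1) with hV'
  haveI : FiniteDimensional ℂ V0 := Module.Finite.equiv (Submodule.equivMapOfInjective _ (mulXL_inj 0) V)
  haveI : FiniteDimensional ℂ V1 := Module.Finite.equiv (Submodule.equivMapOfInjective _ (mulXL_inj 1) V)
  have hr0 : Module.finrank ℂ V0 = Module.finrank ℂ V :=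
    (LinearEquiv.finrank_eq (Submodule.equivMapOfInjective _ (mulXL_inj 0) V)).symm
  have hr1 : Module.finrank ℂ V1 = Module.finrank ℂ V :=
    (LinearEquiv.finrank_eq (Submodule.equivMapOfInjective _ (mulXL_inj 1) V)).symm
  -- V' maps into V via mulXL 0
  have hmap0 : V'.map (mulXL 0) ≤ V := by
    rintro g ⟨w, hw, rfl⟩
    exact hw.1
  haveI hfdmap : FiniteDimensional ℂ (V'.map (mulXL 0)) := Submodule.finiteDimensional_of_le hmap0
  haveI hfdV' : FiniteDimensional ℂ V' :=
    Module.Finite.equiv (Submodule.equivMapOfInjective _ (mulXL_inj 0) V').symm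
  have hrV' : Module.finrank ℂ V' ≤ Module.finrank ℂ V := by
    rw [LinearEquiv.finrank_eq (Submodule.equivMapOfInjective _ (mulXL_inj 0) V')]
    exact Submodule.finrank_mono hmap0
  -- the intersection V0 ⊓ V1 is (X0*X1)•V'
  have hinter : V0 ⊓ V1 = V'.map (mulXL 0 ∘ₗ mulXL 1) := by
    apply le_antisymm
    · rintro g ⟨⟨u, hu, hgu⟩, ⟨v, hv, hgv⟩⟩
      have husupp : ∀ m ∈ u.support, 1 ≤ m 1 := by
        intro m hm
        have h1 : Finsupp.single 0 1 + m ∈ (X 0 * u).support := mem_support_X_mul hm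
        rw [show X 0 * u = X 1 * v by rw [← mulXL_apply, ← mulXL_apply, hgu, hgv]] at h1
        rw [support_X_mul] at h1
        obtain ⟨m'', _, h2⟩ := Finset.mem_map.mp h1
        have := congrArg (fun z => z 1) h2
        simp only [addLeftEmbedding_apply, Finsupp.add_apply, Finsupp.single_apply] at this
        simp at this
        omega
      obtain ⟨w, hw⟩ := exists_eq_X_mul (i := 1) husupp
      have hvw : v = X 0 * w := by
        apply mul_left_cancel₀ (X_ne_zero (1 : Fin 2))
        rw [← mulXL_apply 1 v, hgv, ← hgu, mulXL_apply, hw]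
        ring
      refine ⟨w, ⟨?_, ?_⟩, ?_⟩
      · show mulXL 0 w ∈ V
        rw [mulXL_apply, ← hvw]; exact hv
      · show mulXL 1 w ∈ V
        rw [mulXL_apply, ← hw]; exact hu
      · show mulXL 0 (mulXL 1 w) = g
        rw [mulXL_apply, mulXL_apply, ← hw, ← mulXL_apply, hgu]
    · rintro g ⟨w, hw, rfl⟩
      constructor
      · exact ⟨mulXL 1 w, hw.2, rfl⟩
      · refine ⟨mulXL 0 w, hw.1, ?_⟩
        show X 1 * (X 0 * w) = X 0 * (X 1 * w)
        ring
  have hinj01 : Function.Injective (mulXL 0 ∘ₗ mulXL 1) := by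
    intro a b hab
    exact mulXL_inj 1 (mulXL_inj 0 hab)
  have hrinter : Module.finrank ℂ (V0 ⊓ V1 : Submodule ℂ Rpoly) = Module.finrank ℂ V' := by
    rw [hinter]
    exact (LinearEquiv.finrank_eq (Submodule.equivMapOfInjective _ hinj01 V')).symm
  -- strict inequality finrank V' < finrank V
  have hstrict : Module.finrank ℂ V' < Module.finrank ℂ V := by
    rcases lt_or_eq_of_le hrV' with h | h
    · exact h
    · exfalso
      -- build restricted map and use surjectivity
      have hres : ∀ x ∈ V', mulXL 0 x ∈ V := fun x hx => hx.1
      set φ : V' →ₗ[ℂ] V := (mulXL 0).restrict hres with hφ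
      have hφinj : Function.Injective φ := by
        intro a b hab
        have : mulXL 0 (a : Rpoly) = mulXL 0 (b : Rpoly) := congrArg Subtype.val hab
        exact Subtype.ext (mulXL_inj 0 this)
      have hφsurj : Function.Surjective φ :=
        (LinearMap.injective_iff_surjective_of_finrank_eq_finrank h).mp hφinj
      -- choose minimal nu element of V
      have hex : ∃ x ∈ V, x ≠ (0 : Rpoly) := Submodule.exists_mem_ne_zero_of_ne_bot hV
      set S := {n : ℕ | ∃ h : Rpoly, h ∈ V ∧ h ≠ 0 ∧ nu h = n} with hS
      have hSne : S.Nonempty := by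
        obtain ⟨x, hx, hx0⟩ := hex
        exact ⟨nu x, x, hx, hx0, rfl⟩
      obtain ⟨h₀, hh₀V, hh₀0, hh₀nu⟩ := Nat.sInf_mem hSne
      obtain ⟨w', hw'⟩ := hφsurj ⟨h₀, hh₀V⟩
      set w : Rpoly := (w' : Rpoly) with hwdef
      have hw0 : X 0 * w = h₀ := congrArg Subtype.val hw'
      have hwne : w ≠ 0 := by
        intro h
        rw [h, mul_zero] at hw0
        exact hh₀0 hw0.symm
      have hw1V : X 1 * w ∈ V := w'.2.2
      have hw1ne : X 1 * w ≠ 0 := mul_ne_zero (X_ne_zero 1) hwne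
      have hnu1 : nu (X 1 * w) = nu w := nu_X1_mul hwne
      have hnu0 : nu h₀ = nu w + 1 := by rw [← hw0]; exact nu_X0_mul hwne
      have hmem : nu (X 1 * w) ∈ S := ⟨X 1 * w, hw1V, hw1ne, rfl⟩
      have := Nat.sInf_le hmem
      omega
  have hsupinf := Submodule.finrank_sup_add_finrank_inf_eq V0 V1
  omega

lemma finrank_le_of_le {M : Type*} [AddCommGroup M] [Module ℂ M]
    {p q : Submodule ℂ M} (h : p ≤ q) [FiniteDimensional ℂ q] :
    Module.finrank ℂ p ≤ Module.finrank ℂ q := by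
  rw [← LinearEquiv.finrank_eq (Submodule.comapSubtypeEquivOfLe h)]
  exact Submodule.finrank_le _

def Lsub (J : Ideal Rpoly) (d : ℕ) : Submodule ℂ Rpoly :=
  Hsub d ⊓ ((mIdeal ^ (d+1)).restrictScalars ℂ ⊔ J.restrictScalars ℂ)

lemma Lsub_le_Hsub (J : Ideal Rpoly) (d : ℕ) : Lsub J d ≤ Hsub d := inf_le_left

instance Lsub_fd (J : Ideal Rpoly) (d : ℕ) : FiniteDimensional ℂ (Lsub J d) :=
  Submodule.finiteDimensional_of_le (Lsub_le_Hsub J d)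

lemma Lsub_mono {J J' : Ideal Rpoly} (h : J ≤ J') (d : ℕ) : Lsub J d ≤ Lsub J' d := by
  apply inf_le_inf_left
  apply sup_le_sup_left
  intro x hx
  exact h hx

lemma finrank_Lsub_le (J : Ideal Rpoly) (d : ℕ) :
    Module.finrank ℂ (Lsub J d) ≤ d + 1 := by
  rw [← finrank_Hsub d]
  exact finrank_le_of_le (Lsub_le_Hsub J d)

lemma hc_mem_Lsub {I : Ideal Rpoly} {d : ℕ} {f : Rpoly} (hfI : f ∈ I) (hfd : f ∈ mIdeal ^ d) :
    homogeneousComponent d f ∈ Lsub I d := by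
  constructor
  · exact hc_mem_Hsub d f
  · show homogeneousComponent d f ∈ ((mIdeal ^ (d+1)).restrictScalars ℂ ⊔ I.restrictScalars ℂ : Submodule ℂ Rpoly)
    rw [Submodule.mem_sup]
    exact ⟨-(f - homogeneousComponent d f), neg_mem (sub_hc_mem hfd), f, hfI, by ring⟩

lemma map_mulXL_Lsub_le {I : Ideal Rpoly} {d : ℕ} (i : Fin 2) :
    (Lsub I d).map (mulXL i) ≤ Lsub (mIdeal * I) (d + 1) := by
  rintro g ⟨h, ⟨hH, hsup⟩, rfl⟩
  constructor
  · rw [SetLike.mem_coe, mem_homogeneousSubmodule]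
    have : ((X i : Rpoly) * h).IsHomogeneous (1 + d) :=
      (isHomogeneous_X ℂ i).mul ((mem_homogeneousSubmodule _ _).mp hH)
    rw [mulXL_apply]
    rwa [Nat.add_comm 1 d] at this
  · rw [SetLike.mem_coe] at hsup
    show mulXL i h ∈ ((mIdeal ^ (d+1+1)).restrictScalars ℂ ⊔ (mIdeal*I).restrictScalars ℂ : Submodule ℂ Rpoly)
    rw [Submodule.mem_sup] at hsup ⊢
    obtain ⟨a, ha, b, hb, hab⟩ := hsup
    refine ⟨X i * a, ?_, X i * b, ?_, ?_⟩
    · have hXi : (X i : Rpoly) ∈ mIdeal := by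
        apply Ideal.subset_span
        fin_cases i <;> simp
      have h2 := Ideal.mul_mem_mul hXi ha
      rw [Submodule.restrictScalars_mem]
      rw [show mIdeal ^ (d+1+1) = mIdeal * mIdeal ^ (d+1) from (pow_succ' mIdeal (d+1)).symm ▸ rfl]
      exact h2
    · have hXi : (X i : Rpoly) ∈ mIdeal := by
        apply Ideal.subset_span
        fin_cases i <;> simp
      exact Ideal.mul_mem_mul hXi hb
    · rw [mulXL_apply, ← hab]; ring

lemma Lsub_ne_bot_succ {I : Ideal Rpoly} {d : ℕ} (h : Lsub I d ≠ ⊥) :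
    Lsub (mIdeal * I) (d + 1) ≠ ⊥ := by
  obtain ⟨x, hx, hx0⟩ := Submodule.exists_mem_ne_zero_of_ne_bot h
  intro hbot
  have hmem : mulXL 0 x ∈ Lsub (mIdeal * I) (d+1) :=
    map_mulXL_Lsub_le 0 ⟨x, hx, rfl⟩
  rw [hbot, Submodule.mem_bot] at hmem
  exact mul_ne_zero (X_ne_zero 0) hx0 hmem

lemma Lsub_ne_bot_mono {I : Ideal Rpoly} {d : ℕ} (h : Lsub I d ≠ ⊥) :
    Lsub I (d + 1) ≠ ⊥ := by
  intro hbot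
  apply Lsub_ne_bot_succ h
  rw [← le_bot_iff, ← hbot]
  exact Lsub_mono Ideal.mul_le_right _

section Quot
variable (I : Ideal Rpoly)

def qIL : Rpoly →ₗ[ℂ] Rpoly ⧸ I := (Ideal.Quotient.mkₐ ℂ I).toLinearMap

lemma ker_qIL : LinearMap.ker (qIL I) = I.restrictScalars ℂ := by
  ext x
  simp only [LinearMap.mem_ker, Submodule.restrictScalars_mem]
  exact Ideal.Quotient.eq_zero_iff_mem

def Abar (d : ℕ) : Submodule ℂ (Rpoly ⧸ I) :=
  ((mIdeal ^ d).restrictScalars ℂ).map (qIL I)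

lemma Abar_mono (d : ℕ) : Abar I (d+1) ≤ Abar I d := by
  apply Submodule.map_mono
  intro x hx
  exact Ideal.pow_le_pow_right (Nat.le_succ d) hx

lemma Abar_zero : Abar I 0 = ⊤ := by
  rw [Abar, eq_top_iff]
  intro x _
  obtain ⟨f, rfl⟩ := Ideal.Quotient.mk_surjective x
  exact ⟨f, by simp [Submodule.restrictScalars_mem], rfl⟩

lemma mpow_decomp (d : ℕ) :
    (mIdeal ^ d).restrictScalars ℂ = Hsub d ⊔ (mIdeal ^ (d+1)).restrictScalars ℂ := by
  apply le_antisymm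
  · intro f hf
    rw [Submodule.restrictScalars_mem] at hf
    rw [Submodule.mem_sup]
    exact ⟨homogeneousComponent d f, hc_mem_Hsub d f, f - homogeneousComponent d f,
      sub_hc_mem hf, by ring⟩
  · apply sup_le (Hsub_le_mpow d)
    intro x hx
    exact Ideal.pow_le_pow_right (Nat.le_succ d) hx

variable [FiniteDimensional ℂ (Rpoly ⧸ I)]

lemma A1 (d : ℕ) :
    Module.finrank ℂ (Abar I d) + Module.finrank ℂ (Lsub I d) =
      Module.finrank ℂ (Abar I (d+1)) + (d + 1) := by
  classical
  set β : (Hsub d) →ₗ[ℂ] (Rpoly ⧸ I) ⧸ (Abar I (d+1)) :=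
    (Abar I (d+1)).mkQ ∘ₗ (qIL I) ∘ₗ (Hsub d).subtype with hβ
  have hkerβ : LinearMap.ker β = Submodule.comap (Hsub d).subtype (Lsub I d) := by
    ext x
    simp only [hβ, LinearMap.mem_ker, LinearMap.comp_apply, Submodule.mem_comap]
    rw [Submodule.mkQ_apply, Submodule.Quotient.mk_eq_zero]
    constructor
    · intro hx
      have h2 : (x : Rpoly) ∈ ((mIdeal ^ (d+1)).restrictScalars ℂ) ⊔ I.restrictScalars ℂ := by
        rw [show I.restrictScalars ℂ = LinearMap.ker (qIL I) from (ker_qIL I).symm,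
          ← Submodule.comap_map_eq]
        exact Submodule.mem_comap.mpr hx
      exact ⟨x.2, h2⟩
    · intro hx
      have h2 := hx.2
      rw [show I.restrictScalars ℂ = LinearMap.ker (qIL I) from (ker_qIL I).symm,
        ← Submodule.comap_map_eq] at h2
      exact Submodule.mem_comap.mp h2
  have hrkker : Module.finrank ℂ (LinearMap.ker β) = Module.finrank ℂ (Lsub I d) := by
    rw [hkerβ]
    exact LinearEquiv.finrank_eq (Submodule.comapSubtypeEquivOfLe (Lsub_le_Hsub I d))
  have hrangeβ : LinearMap.range β = (Abar I d).map (Abar I (d+1)).mkQ := by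
    rw [hβ, LinearMap.range_comp, LinearMap.range_comp, Submodule.range_subtype]
    have hAd : Abar I d = (Hsub d).map (qIL I) ⊔ Abar I (d+1) := by
      rw [Abar, mpow_decomp d, Submodule.map_sup]; rfl
    rw [hAd, Submodule.map_sup]
    have : (Abar I (d+1)).map (Abar I (d+1)).mkQ = ⊥ := by
      rw [eq_bot_iff]
      rintro y ⟨z, hz, rfl⟩
      simp only [Submodule.mkQ_apply, Submodule.mem_bot, Submodule.Quotient.mk_eq_zero]
      exact hz
    rw [this, sup_bot_eq]
  have hrn := LinearMap.finrank_range_add_finrank_ker β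
  rw [finrank_Hsub d, hrkker, hrangeβ] at hrn
  -- second rank computation
  set γ : (Abar I d) →ₗ[ℂ] (Rpoly ⧸ I) ⧸ (Abar I (d+1)) :=
    (Abar I (d+1)).mkQ ∘ₗ (Abar I d).subtype with hγ
  have hrangeγ : LinearMap.range γ = (Abar I d).map (Abar I (d+1)).mkQ := by
    rw [hγ, LinearMap.range_comp, Submodule.range_subtype]
  have hkerγ : LinearMap.ker γ = Submodule.comap (Abar I d).subtype (Abar I (d+1)) := by
    rw [hγ, LinearMap.ker_comp, Submodule.ker_mkQ]
  have hrn2 := LinearMap.finrank_range_add_finrank_ker γ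
  rw [hrangeγ, hkerγ] at hrn2
  have hrkker2 : Module.finrank ℂ (Submodule.comap (Abar I d).subtype (Abar I (d+1)))
      = Module.finrank ℂ (Abar I (d+1)) :=
    LinearEquiv.finrank_eq (Submodule.comapSubtypeEquivOfLe (Abar_mono I d))
  rw [hrkker2] at hrn2
  omega

lemma A2 (e : ℕ) (h : ∀ d < e, Lsub I d = ⊥) :
    2 * Module.finrank ℂ (Rpoly ⧸ I) = 2 * Module.finrank ℂ (Abar I e) + e * (e + 1) := by
  induction e with
  | zero =>
    rw [Abar_zero]
    rw [finrank_top]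
    ring
  | succ e ih =>
    have h1 := ih (fun d hd => h d (Nat.lt_succ_of_lt hd))
    have h2 := A1 I e
    rw [h e (Nat.lt_succ_self e), finrank_bot, add_zero] at h2
    have h3 : (e+1) * (e+1+1) = e * (e+1) + 2 * (e+1) := by ring
    omega

end Quot

lemma finrank_step {W : Type*} [AddCommGroup W] [Module ℂ W]
    (P Q : Submodule ℂ W) (h : Q ≤ P) [FiniteDimensional ℂ P] :
    Module.finrank ℂ P = Module.finrank ℂ (P.map Q.mkQ) + Module.finrank ℂ Q := by
  set γ : P →ₗ[ℂ] W ⧸ Q := Q.mkQ ∘ₗ P.subtype with hγ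
  have hrange : LinearMap.range γ = P.map Q.mkQ := by
    rw [hγ, LinearMap.range_comp, Submodule.range_subtype]
  have hker : LinearMap.ker γ = Submodule.comap P.subtype Q := by
    rw [hγ, LinearMap.ker_comp, Submodule.ker_mkQ]
  have hrn := LinearMap.finrank_range_add_finrank_ker γ
  rw [hrange, hker] at hrn
  have h2 : Module.finrank ℂ (Submodule.comap P.subtype Q) = Module.finrank ℂ Q :=
    LinearEquiv.finrank_eq (Submodule.comapSubtypeEquivOfLe h)
  omega

section MuSide
variable (I : Ideal Rpoly)

lemma qIL_apply (J : Ideal Rpoly) (f : Rpoly) : qIL J f = Ideal.Quotient.mk J f := rfl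

def Mbar (d : ℕ) : Submodule ℂ (Rpoly ⧸ (mIdeal * I)) :=
  ((I ⊓ mIdeal ^ d).restrictScalars ℂ).map (qIL (mIdeal * I))

lemma Mbar_mono (d : ℕ) : Mbar I (d+1) ≤ Mbar I d := by
  apply Submodule.map_mono
  intro x hx
  exact ⟨hx.1, Ideal.pow_le_pow_right (Nat.le_succ d) hx.2⟩

lemma mu_eq_Mbar : mu I = Module.finrank ℂ (Mbar I 0) := by
  have : Submodule.restrictScalars ℂ (I.map (Ideal.Quotient.mk (mIdeal * I))) = Mbar I 0 := by
    ext x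
    simp only [Submodule.restrictScalars_mem, Mbar, Submodule.mem_map,
      Submodule.restrictScalars_mem]
    rw [Ideal.mem_map_iff_of_surjective _ Ideal.Quotient.mk_surjective]
    constructor
    · rintro ⟨f, hf, rfl⟩
      exact ⟨f, ⟨hf, by simp⟩, rfl⟩
    · rintro ⟨f, hf, rfl⟩
      exact ⟨f, hf.1, rfl⟩
  rw [mu, this]

lemma sub_C_mem_m (r : Rpoly) : r - C (coeff 0 r) ∈ mIdeal := by
  rw [show mIdeal = mIdeal ^ 1 by rw [pow_one]]
  rw [mem_mpow]
  intro m hm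
  rw [mem_support_iff, coeff_sub, coeff_C] at hm
  by_cases h0 : m = 0
  · subst h0; simp at hm
  · rcases Nat.lt_or_ge (m 0 + m 1) 1 with h | h
    · exfalso
      apply h0
      have ha : m 0 = 0 := by omega
      have hb : m 1 = 0 := by omega
      ext i
      fin_cases i <;> simp [ha, hb]
    · exact h

instance Mbar_fd_zero : FiniteDimensional ℂ (Mbar I 0) := by
  obtain ⟨s, hs⟩ := (IsNoetherian.noetherian I : I.FG)
  have heq : Mbar I 0 = Submodule.span ℂ ((qIL (mIdeal * I)) '' (s : Set Rpoly)) := by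
    apply le_antisymm
    · rintro x ⟨f, hf, rfl⟩
      have hfI : f ∈ Submodule.span Rpoly (s : Set Rpoly) := by
        rw [hs]; exact hf.1
      clear hf
      induction hfI using Submodule.span_induction with
      | mem z hz => exact Submodule.subset_span ⟨z, hz, rfl⟩
      | zero => rw [map_zero]; exact Submodule.zero_mem _
      | add y z _ _ hy hz => rw [map_add]; exact Submodule.add_mem _ hy hz
      | smul r z hzspan hzmem =>
        have hzI : z ∈ I := by rw [← hs]; exact hzspan
        have hdec : r • z = C (coeff 0 r) * z + (r - C (coeff 0 r)) * z := by
          rw [smul_eq_mul]; ring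
        rw [hdec, map_add]
        have h1 : qIL (mIdeal * I) ((r - C (coeff 0 r)) * z) = 0 := by
          rw [qIL_apply, Ideal.Quotient.eq_zero_iff_mem]
          exact Ideal.mul_mem_mul (sub_C_mem_m r) hzI
        rw [h1, add_zero, show (C (coeff 0 r) * z) = (coeff 0 r) • z from
          (smul_eq_C_mul z (coeff 0 r)).symm, map_smul]
        exact Submodule.smul_mem _ _ hzmem
    · rw [Submodule.span_le]
      rintro x ⟨f, hf, rfl⟩
      refine ⟨f, ⟨by rw [← hs]; exact Submodule.subset_span hf, by simp⟩, rfl⟩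
  rw [heq]
  exact FiniteDimensional.span_of_finite ℂ ((s : Set Rpoly).toFinite.image _)

lemma Mbar_le_zero (d : ℕ) : Mbar I d ≤ Mbar I 0 := by
  apply Submodule.map_mono
  intro x hx
  exact ⟨hx.1, Ideal.pow_le_pow_right (Nat.zero_le d) hx.2⟩

instance Mbar_fd (d : ℕ) : FiniteDimensional ℂ (Mbar I d) :=
  Submodule.finiteDimensional_of_le (Mbar_le_zero I d)

lemma M2 (d : ℕ) :
    Module.finrank ℂ (Mbar I d) + Module.finrank ℂ (Lsub (mIdeal * I) d) ≤
      Module.finrank ℂ (Mbar I (d+1)) + Module.finrank ℂ (Lsub I d) := by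
  classical
  set A : Submodule ℂ Rpoly := (I ⊓ mIdeal ^ d).restrictScalars ℂ with hA
  set K : Submodule ℂ (Lsub I d) :=
    Submodule.comap (Lsub I d).subtype (Lsub (mIdeal * I) d) with hK
  have hψmem : ∀ a : A, homogeneousComponent d (a : Rpoly) ∈ Lsub I d := by
    intro a
    have h2 := a.2
    rw [Submodule.restrictScalars_mem, Submodule.mem_inf] at h2
    exact hc_mem_Lsub h2.1 h2.2
  set ψ₀ : A →ₗ[ℂ] (Lsub I d) :=
    LinearMap.codRestrict (Lsub I d)
      ((homogeneousComponent d : Rpoly →ₗ[ℂ] Rpoly) ∘ₗ A.subtype) hψmem with hψ₀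
  set Ψ : A →ₗ[ℂ] (Lsub I d) ⧸ K := K.mkQ ∘ₗ ψ₀ with hΨ
  set α : A →ₗ[ℂ] (Rpoly ⧸ (mIdeal * I)) ⧸ (Mbar I (d+1)) :=
    (Mbar I (d+1)).mkQ ∘ₗ (qIL (mIdeal * I)) ∘ₗ A.subtype with hα
  have hkerle : LinearMap.ker Ψ ≤ LinearMap.ker α := by
    intro a ha
    rw [LinearMap.mem_ker, hΨ, LinearMap.comp_apply, Submodule.mkQ_apply,
      Submodule.Quotient.mk_eq_zero] at ha
    rw [hK, Submodule.mem_comap] at ha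
    have ha' : homogeneousComponent d (a : Rpoly) ∈ Lsub (mIdeal * I) d := ha
    obtain ⟨hH, hsup⟩ := ha'
    rw [SetLike.mem_coe, Submodule.mem_sup] at hsup
    obtain ⟨b, hb, c, hc, hbc⟩ := hsup
    have h2 := a.2
    rw [Submodule.restrictScalars_mem, Submodule.mem_inf] at h2
    have hu : (a : Rpoly) - c ∈ (I ⊓ mIdeal ^ (d+1) : Ideal Rpoly) := by
      constructor
      · exact Submodule.sub_mem _ h2.1 (Ideal.mul_le_right hc)
      · have h3 : (a : Rpoly) - c =
            ((a : Rpoly) - homogeneousComponent d (a : Rpoly)) + b := by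
          rw [← hbc]; ring
        rw [h3]
        exact Submodule.add_mem _ (sub_hc_mem h2.2) hb
    rw [LinearMap.mem_ker, hα, LinearMap.comp_apply, LinearMap.comp_apply,
      Submodule.mkQ_apply, Submodule.Quotient.mk_eq_zero]
    have h4 : qIL (mIdeal * I) (a : Rpoly) = qIL (mIdeal * I) ((a : Rpoly) - c) := by
      rw [qIL_apply, qIL_apply]
      rw [Ideal.Quotient.mk_eq_mk_iff_sub_mem]
      simpa using (show c ∈ mIdeal * I from hc)
    show (qIL (mIdeal * I)) (a : Rpoly) ∈ Mbar I (d + 1)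
    rw [h4]
    exact ⟨(a : Rpoly) - c, hu, rfl⟩
  have hrangeα : LinearMap.range α = (Mbar I d).map (Mbar I (d+1)).mkQ := by
    rw [hα, LinearMap.range_comp, LinearMap.range_comp, Submodule.range_subtype]
    rfl
  -- finrank chain
  haveI hfdq : FiniteDimensional ℂ ((Lsub I d) ⧸ K) :=
    FiniteDimensional.finiteDimensional_quotient K
  haveI : FiniteDimensional ℂ (LinearMap.range Ψ) :=
    FiniteDimensional.finiteDimensional_submodule (LinearMap.range Ψ)
  have e₁ := LinearMap.quotKerEquivRange Ψ
  haveI : FiniteDimensional ℂ (A ⧸ LinearMap.ker Ψ) := Module.Finite.equiv e₁.symm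
  set ρ : (A ⧸ LinearMap.ker Ψ) →ₗ[ℂ] (Rpoly ⧸ (mIdeal * I)) ⧸ (Mbar I (d+1)) :=
    (LinearMap.ker Ψ).liftQ α hkerle with hρ
  have hrangeρ : LinearMap.range ρ = LinearMap.range α := Submodule.range_liftQ _ _ _
  have hr1 : Module.finrank ℂ ((Mbar I d).map (Mbar I (d+1)).mkQ) ≤
      Module.finrank ℂ ((Lsub I d) ⧸ K) := by
    rw [← hrangeα, ← hrangeρ]
    calc Module.finrank ℂ (LinearMap.range ρ) ≤ Module.finrank ℂ (A ⧸ LinearMap.ker Ψ) :=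
          LinearMap.finrank_range_le ρ
      _ = Module.finrank ℂ (LinearMap.range Ψ) := LinearEquiv.finrank_eq e₁
      _ ≤ Module.finrank ℂ ((Lsub I d) ⧸ K) := (LinearMap.range Ψ).finrank_le
  have hq : Module.finrank ℂ ((Lsub I d) ⧸ K) + Module.finrank ℂ K =
      Module.finrank ℂ (Lsub I d) := Submodule.finrank_quotient_add_finrank K
  have hKrank : Module.finrank ℂ K = Module.finrank ℂ (Lsub (mIdeal * I) d) :=
    LinearEquiv.finrank_eq (Submodule.comapSubtypeEquivOfLe (Lsub_mono Ideal.mul_le_right d))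
  have hstep := finrank_step (Mbar I d) (Mbar I (d+1)) (Mbar_mono I d)
  omega

lemma Mbar_vanish : ∃ c : ℕ, ∀ d, c + 1 ≤ d → Mbar I d = ⊥ := by
  obtain ⟨c, hc⟩ := Ideal.exists_pow_inf_eq_pow_smul mIdeal (I : Submodule Rpoly Rpoly)
  refine ⟨c, fun d hd => ?_⟩
  have h1 : (I ⊓ mIdeal ^ d : Ideal Rpoly) ≤ mIdeal * I := by
    have h2 := hc d (by omega)
    have e1 : (mIdeal ^ d • ⊤ : Submodule Rpoly Rpoly) = (mIdeal ^ d : Ideal Rpoly) := by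
      rw [Ideal.smul_eq_mul, Ideal.mul_top]
    have e2 : (mIdeal ^ c • ⊤ : Submodule Rpoly Rpoly) = (mIdeal ^ c : Ideal Rpoly) := by
      rw [Ideal.smul_eq_mul, Ideal.mul_top]
    rw [e1, e2] at h2
    have h3 : (I ⊓ mIdeal ^ d : Ideal Rpoly) = mIdeal ^ (d - c) • (mIdeal ^ c ⊓ I) := by
      rw [inf_comm]
      exact h2
    rw [h3, Ideal.smul_eq_mul]
    exact Ideal.mul_mono (Ideal.pow_le_self (by omega)) inf_le_right
  rw [Mbar, eq_bot_iff]
  rintro x ⟨f, hf, rfl⟩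
  rw [Submodule.mem_bot]
  rw [qIL_apply, Ideal.Quotient.eq_zero_iff_mem]
  exact h1 hf

lemma Mchain_base (d₀ : ℕ) (hbot : ∀ d < d₀, Lsub I d = ⊥) :
    ∀ e ≤ d₀, Module.finrank ℂ (Mbar I 0) ≤ Module.finrank ℂ (Mbar I e) := by
  intro e
  induction e with
  | zero => intro _; exact le_refl _
  | succ e ih =>
    intro he
    have h1 := ih (by omega)
    have h2 := M2 I e
    rw [hbot e (by omega), finrank_bot] at h2
    have h3 : Lsub (mIdeal * I) e = ⊥ := by
      rw [← le_bot_iff, ← hbot e (by omega)]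
      exact Lsub_mono Ideal.mul_le_right e
    rw [h3, finrank_bot] at h2
    omega

lemma Lsub_ne_bot_ge {d₀ : ℕ} (hne : Lsub I d₀ ≠ ⊥) :
    ∀ E, d₀ ≤ E → Lsub I E ≠ ⊥ := by
  intro E hE
  induction E, hE using Nat.le_induction with
  | base => exact hne
  | succ E hE ih => exact Lsub_ne_bot_mono ih

lemma Mchain (d₀ : ℕ) (hbot : ∀ d < d₀, Lsub I d = ⊥) (hne : Lsub I d₀ ≠ ⊥) :
    ∀ E, d₀ ≤ E → Module.finrank ℂ (Mbar I 0) + (E - d₀) ≤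
      Module.finrank ℂ (Lsub I E) + Module.finrank ℂ (Mbar I (E+1)) := by
  intro E hE
  induction E, hE using Nat.le_induction with
  | base =>
    have h1 := Mchain_base I d₀ hbot d₀ (le_refl _)
    have h2 := M2 I d₀
    omega
  | succ E hE ih =>
    have h2 := M2 I (E + 1)
    have hsup_le : (Lsub I E).map (mulXL 0) ⊔ (Lsub I E).map (mulXL 1) ≤
        Lsub (mIdeal * I) (E + 1) :=
      sup_le (map_mulXL_Lsub_le 0) (map_mulXL_Lsub_le 1)
    have hA := lemA (Lsub I E) inferInstance (Lsub_ne_bot_ge I hne E hE)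
    have h3 : Module.finrank ℂ ↥((Lsub I E).map (mulXL 0) ⊔ (Lsub I E).map (mulXL 1)) ≤
        Module.finrank ℂ (Lsub (mIdeal * I) (E+1)) := finrank_le_of_le hsup_le
    omega

lemma mu_le (d₀ : ℕ) (hbot : ∀ d < d₀, Lsub I d = ⊥) (hne : Lsub I d₀ ≠ ⊥) :
    mu I ≤ d₀ + 1 := by
  obtain ⟨c, hc⟩ := Mbar_vanish I
  have h1 := Mchain I d₀ hbot hne (d₀ + c + 1) (by omega)
  rw [hc (d₀ + c + 1 + 1) (by omega), finrank_bot] at h1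
  have h2 := finrank_Lsub_le I (d₀ + c + 1)
  rw [mu_eq_Mbar]
  omega

end MuSide

lemma I_le_mpow (I : Ideal Rpoly) (e : ℕ) (h : ∀ d < e, Lsub I d = ⊥) :
    I ≤ mIdeal ^ e := by
  induction e with
  | zero => rw [pow_zero, Ideal.one_eq_top]; exact le_top
  | succ e ih =>
    intro f hf
    have hfe : f ∈ mIdeal ^ e := ih (fun d hd => h d (by omega)) hf
    have hL : homogeneousComponent e f ∈ Lsub I e := hc_mem_Lsub hf hfe
    rw [h e (by omega), Submodule.mem_bot] at hL
    exact mem_succ_of_hc_zero hfe hL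

lemma exists_Lsub_ne_bot {I : Ideal Rpoly} (hI : I ≠ ⊥) : ∃ d, Lsub I d ≠ ⊥ := by
  obtain ⟨f, hfI, hf0⟩ := Submodule.exists_mem_ne_zero_of_ne_bot hI
  set S := {n : ℕ | ∃ m ∈ f.support, m 0 + m 1 = n} with hS
  have hSne : S.Nonempty := by
    obtain ⟨m, hm⟩ := MvPolynomial.support_nonempty.mpr hf0
    exact ⟨m 0 + m 1, m, hm, rfl⟩
  set e := sInf S with he
  obtain ⟨m₀, hm₀, hm₀deg⟩ := Nat.sInf_mem hSne
  have hfe : f ∈ mIdeal ^ e := by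
    rw [mem_mpow]
    intro m hm
    exact Nat.sInf_le ⟨m, hm, rfl⟩
  refine ⟨e, ?_⟩
  have hL : homogeneousComponent e f ∈ Lsub I e := hc_mem_Lsub hfI hfe
  intro hbot
  rw [hbot, Submodule.mem_bot] at hL
  have : coeff m₀ (homogeneousComponent e f) = coeff m₀ f := by
    rw [coeff_homogeneousComponent, if_pos (by rw [deg_eq]; exact hm₀deg)]
  rw [hL] at this
  simp only [coeff_zero] at this
  exact mem_support_iff.mp hm₀ this.symm

lemma Lsub_mpow_bot (j : ℕ) : ∀ d < j, Lsub (mIdeal ^ j) d = ⊥ := by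
  intro d hd
  rw [eq_bot_iff]
  rintro x ⟨hH, hsup⟩
  rw [SetLike.mem_coe] at hsup
  have hle : (mIdeal ^ j).restrictScalars ℂ ≤ (mIdeal ^ (d+1)).restrictScalars ℂ := by
    intro z hz
    exact Ideal.pow_le_pow_right (by omega) hz
  rw [sup_of_le_left hle] at hsup
  rw [Submodule.mem_bot]
  rw [← hc_of_mem_Hsub hH]
  exact hc_eq_zero hsup

lemma Abar_mpow_bot (j : ℕ) : Abar (mIdeal ^ j) j = ⊥ := by
  rw [Abar, eq_bot_iff]
  rintro x ⟨f, hf, rfl⟩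
  rw [Submodule.mem_bot, qIL_apply, Ideal.Quotient.eq_zero_iff_mem]
  exact hf

lemma mul_pred (k : ℕ) : k * (k - 1) = (k - 1) * ((k - 1) + 1) := by
  cases k with
  | zero => simp
  | succ t => simp [Nat.succ_sub_one]; ring


/-- If `I ⊴ ℂ[x,y]` has finite colength `n = dim_ℂ R/I` and `k = dim_ℂ I/(𝔪·I)`,
then `n = k(k-1)/2` if and only if `I = 𝔪^(k-1)`. -/
theorem stmt1 (I : Ideal Rpoly) (n k : ℕ)
    (hfin : FiniteDimensional ℂ (Rpoly ⧸ I))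
    (hn : Module.finrank ℂ (Rpoly ⧸ I) = n)
    (hk : mu I = k) :
    n = k * (k - 1) / 2 ↔ I = mIdeal ^ (k - 1) := by
  constructor
  · intro hnk
    by_cases hk0 : k = 0
    · subst hk0
      simp only [Nat.zero_sub, Nat.mul_zero, Nat.zero_mul, Nat.zero_div] at hnk
      have h0 : Module.finrank ℂ (Rpoly ⧸ I) = 0 := by rw [hn, hnk]
      have hsing : Subsingleton (Rpoly ⧸ I) := Module.finrank_zero_iff.mp h0
      have htop : I = ⊤ := by
        rw [Ideal.eq_top_iff_one]
        have h1 : Ideal.Quotient.mk I 1 = Ideal.Quotient.mk I 0 := Subsingleton.elim _ _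
        rw [map_zero, Ideal.Quotient.eq_zero_iff_mem] at h1
        exact h1
      rw [htop, show (0:ℕ) - 1 = 0 from rfl, pow_zero, Ideal.one_eq_top]
    · have hk1 : 1 ≤ k := by omega
      have hIbot : I ≠ ⊥ := by
        intro h
        rw [h] at hk
        rw [mu, Ideal.map_bot] at hk
        simp only [Submodule.restrictScalars_bot] at hk
        erw [finrank_bot] at hk
        omega
      classical
      have hex := exists_Lsub_ne_bot hIbot
      set d₀ := Nat.find hex with hd₀
      have hne : Lsub I d₀ ≠ ⊥ := Nat.find_spec hex
      have hbot : ∀ d < d₀, Lsub I d = ⊥ := by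
        intro d hd
        have := Nat.find_min hex hd
        exact not_not.mp this
      have hkle : k ≤ d₀ + 1 := by
        rw [← hk]
        exact mu_le I d₀ hbot hne
      have hA2 := A2 I d₀ hbot
      rw [hn] at hA2
      have hmp := mul_pred k
      have heven : ∃ t, k * (k - 1) = 2 * t := by
        have h := Nat.even_mul_succ_self (k - 1)
        rw [← hmp] at h
        obtain ⟨t, ht⟩ := h
        exact ⟨t, by omega⟩
      obtain ⟨t, ht⟩ := heven
      have h2n : 2 * n = k * (k - 1) := by omega
      set j := k - 1 with hj
      have hjd : j ≤ d₀ := by omega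
      have hd₀j : d₀ = j := by
        by_contra hne2
        have hlt : j + 1 ≤ d₀ := by omega
        have hp2 : (j+1) * (j+1+1) ≤ d₀ * (d₀+1) := Nat.mul_le_mul hlt (by omega)
        have hp3 : (j+1) * (j+1+1) = j*(j+1) + 2*(j+1) := by ring
        omega
      rw [hd₀j] at hA2
      have ha0 : Module.finrank ℂ (Abar I d₀) = 0 := by
        rw [hd₀j]
        omega
      have hAbot : Abar I d₀ = ⊥ := by
        rw [← Submodule.finrank_eq_zero (R := ℂ)]
        exact ha0
      have hmle : mIdeal ^ d₀ ≤ I := by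
        intro x hx
        have hmem : qIL I x ∈ Abar I d₀ := ⟨x, hx, rfl⟩
        rw [hAbot, Submodule.mem_bot, qIL_apply, Ideal.Quotient.eq_zero_iff_mem] at hmem
        exact hmem
      have hlem := I_le_mpow I d₀ hbot
      rw [← hd₀j]
      exact le_antisymm hlem hmle
  · intro hI
    subst hI
    set j := k - 1 with hj
    have hA2 := A2 (mIdeal ^ j) j (Lsub_mpow_bot j)
    rw [Abar_mpow_bot j, finrank_bot, hn] at hA2
    have hkj : k * j = j * (j + 1) := by
      have := mul_pred k
      rw [← hj] at this
      exact this
    omega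

end
end

section
/- For natural numbers i ≤ j, the following orthogonality relation holds in the field K = ℚ(t): ∑_{k=i}^{j} (−1)^{k−i} · t^{(k−i)(k−i−1)/2} · [j choose k]_t · [k choose i]_t equals 1 if i = j and equals 0 if i < j. Equivalently, the (lower-triangular-to-upper) matrix ([j choose i]_t)_{i,j} has inverse ((−1)^{j−i} t^{binom(j−i,2)} [j choose i]_t)_{i,j}. -/
noncomputable section

/-- The field `K = ℚ(t)` of rational functions. -/
abbrev K : Type := RatFunc ℚ

/-- The indeterminate `t` of `K = ℚ(t)`. -/
noncomputable def t : K := RatFunc.X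

/-- The Gaussian binomial coefficient `[m choose a]_t ∈ ℚ(t)`:
`∏_{i=0}^{a-1} (1 - t^{m-i})/(1 - t^{i+1})` if `a ≤ m`, and `0` if `a > m`. -/
noncomputable def gb (m a : ℕ) : K :=
  if a ≤ m then ∏ i ∈ Finset.range a, (1 - t ^ (m - i)) / (1 - t ^ (i + 1)) else 0

/-- The q-factorial-like product `∏_{i<n} (1 - t^{i+1})`. -/
noncomputable def qf (n : ℕ) : K := ∏ i ∈ Finset.range n, (1 - t ^ (i + 1))

lemma one_sub_tpow_ne (k : ℕ) : (1 : K) - t ^ (k + 1) ≠ 0 := by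
  intro hh
  have h1 : (t : K) ^ (k + 1) = 1 := by linear_combination -hh
  have h2 : (algebraMap (Polynomial ℚ) K) (Polynomial.X ^ (k + 1)) =
      (algebraMap (Polynomial ℚ) K) 1 := by
    simpa [t, RatFunc.algebraMap_X] using h1
  have h3 : (Polynomial.X : Polynomial ℚ) ^ (k + 1) = 1 :=
    RatFunc.algebraMap_injective ℚ h2
  have := congrArg Polynomial.natDegree h3
  simp [Polynomial.natDegree_X_pow] at this

lemma qf_ne_zero (n : ℕ) : qf n ≠ 0 := by
  unfold qf
  rw [Finset.prod_ne_zero_iff]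
  exact fun i _ => one_sub_tpow_ne i

lemma qf_succ (n : ℕ) : qf (n + 1) = qf n * (1 - t ^ (n + 1)) :=
  Finset.prod_range_succ _ n

lemma qf_zero : qf 0 = 1 := rfl

lemma num_prod (a b : ℕ) :
    qf b * ∏ i ∈ Finset.range a, (1 - t ^ (a + b - i)) = qf (a + b) := by
  induction a with
  | zero => simp [qf]
  | succ a ih =>
      rw [Finset.prod_range_succ' (fun i => (1 : K) - t ^ (a + 1 + b - i))]
      have h1 : ∀ i : ℕ, a + 1 + b - (i + 1) = a + b - i := by omega
      have h2 : a + 1 + b - 0 = a + b + 1 := by omega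
      simp only [h1, h2]
      have h3 : a + 1 + b = (a + b) + 1 := by omega
      rw [h3, qf_succ, ← ih]
      ring

lemma gb_eq (a b : ℕ) : gb (a + b) a = qf (a + b) / (qf a * qf b) := by
  rw [gb, if_pos (by omega)]
  rw [Finset.prod_div_distrib]
  have hd : ∏ i ∈ Finset.range a, ((1 : K) - t ^ (i + 1)) = qf a := rfl
  rw [hd, ← num_prod a b]
  field_simp [qf_ne_zero]

lemma gb_self (m : ℕ) : gb m m = 1 := by
  have := gb_eq m 0
  simp only [Nat.add_zero, qf_zero, mul_one] at this
  rw [this, div_self (qf_ne_zero m)]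

lemma gb_zero (m : ℕ) : gb m 0 = 1 := by
  rw [gb, if_pos (by omega)]
  simp

lemma gb_of_gt {m a : ℕ} (h : m < a) : gb m a = 0 := by
  rw [gb, if_neg (by omega)]

lemma pascal (a b : ℕ) :
    gb (a + b + 1) (a + 1) = gb (a + b) (a + 1) + t ^ b * gb (a + b) a := by
  cases b with
  | zero =>
      simp [gb_self, gb_of_gt (Nat.lt_succ_self a)]
  | succ c =>
      have e1 : a + (c + 1) + 1 = (a + 1) + (c + 1) := by ring
      have e2 : a + (c + 1) = (a + 1) + c := by ring
      have e3 : a + (c + 1) = a + (c + 1) := rfl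
      have g1 : gb (a + (c + 1) + 1) (a + 1) =
          qf ((a + 1) + (c + 1)) / (qf (a + 1) * qf (c + 1)) := by
        rw [e1]; exact gb_eq (a + 1) (c + 1)
      have g2 : gb (a + (c + 1)) (a + 1) = qf ((a + 1) + c) / (qf (a + 1) * qf c) := by
        rw [e2]; exact gb_eq (a + 1) c
      have g3 : gb (a + (c + 1)) a = qf (a + (c + 1)) / (qf a * qf (c + 1)) :=
        gb_eq a (c + 1)
      rw [g1, g2, g3]
      have f1 : qf (a + 1) = qf a * (1 - t ^ (a + 1)) := qf_succ a
      have f2 : qf (c + 1) = qf c * (1 - t ^ (c + 1)) := qf_succ c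
      have f3 : qf ((a + 1) + (c + 1)) = qf (a + c + 1) * (1 - t ^ (a + c + 1 + 1)) := by
        have : (a + 1) + (c + 1) = (a + c + 1) + 1 := by ring
        rw [this]; exact qf_succ _
      have f4 : qf ((a + 1) + c) = qf (a + c + 1) := by rw [show (a+1)+c = a+c+1 by ring]
      have f5 : qf (a + (c + 1)) = qf (a + c + 1) := by rw [show a+(c+1) = a+c+1 by ring]
      rw [f3, f4, f5, f1, f2]
      have ha := qf_ne_zero a
      have hc := qf_ne_zero c
      have hac := qf_ne_zero (a + c + 1)
      have h1 := one_sub_tpow_ne a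
      have h2 := one_sub_tpow_ne c
      field_simp
      ring

/-- The alternating sum `S n = ∑_{m≤n} (-1)^m t^{C(m,2)} [n,m]`. -/
noncomputable def S (n : ℕ) : K :=
  ∑ m ∈ Finset.range (n + 1), (-1 : K) ^ m * t ^ (m * (m - 1) / 2) * gb n m

lemma S_zero : S 0 = 1 := by simp [S, gb_zero]

lemma S_succ (n : ℕ) : S (n + 1) = (1 - t ^ n) * S n := by
  rw [S, Finset.sum_range_succ' (fun m => (-1 : K) ^ m * t ^ (m * (m - 1) / 2) * gb (n+1) m)]
  have hzero : (-1 : K) ^ 0 * t ^ (0 * (0 - 1) / 2) * gb (n + 1) 0 = 1 := by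
    simp [gb_zero]
  rw [hzero]
  have hpas : ∀ a ∈ Finset.range (n + 1),
      (-1 : K) ^ (a + 1) * t ^ ((a + 1) * (a + 1 - 1) / 2) * gb (n + 1) (a + 1)
      = (-1 : K) ^ (a + 1) * t ^ ((a + 1) * (a + 1 - 1) / 2) * gb n (a + 1)
        + (-(1 : K)) * ((-1 : K) ^ a * t ^ (a * (a - 1) / 2) * gb n a) * t ^ n := by
    intro a ha
    have haa : a ≤ n := by simp at ha; omega
    have hn : n = a + (n - a) := by omega
    have hp : gb (n + 1) (a + 1) = gb n (a + 1) + t ^ (n - a) * gb n a := by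
      conv_lhs => rw [hn]
      rw [pascal a (n - a), ← hn]
    rw [hp]
    have hexp : (a + 1) * (a + 1 - 1) / 2 + (n - a) = a * (a - 1) / 2 + n := by
      rw [Nat.triangle_succ]; omega
    have : t ^ ((a + 1) * (a + 1 - 1) / 2) * t ^ (n - a) = t ^ (a * (a - 1) / 2) * t ^ n := by
      rw [← pow_add, ← pow_add, hexp]
    rw [mul_add]
    linear_combination ((-1 : K) ^ (a + 1) * gb n a) * this
  rw [Finset.sum_congr rfl hpas, Finset.sum_add_distrib]
  have hA : (∑ a ∈ Finset.range (n + 1),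
      (-1 : K) ^ (a + 1) * t ^ ((a + 1) * (a + 1 - 1) / 2) * gb n (a + 1)) + 1 = S n := by
    have h1 := Finset.sum_range_succ'
      (fun m => (-1 : K) ^ m * t ^ (m * (m - 1) / 2) * gb n m) (n + 1)
    have h2 := Finset.sum_range_succ
      (fun m => (-1 : K) ^ m * t ^ (m * (m - 1) / 2) * gb n m) (n + 1)
    simp only [gb_zero, pow_zero, Nat.zero_mul, Nat.zero_div, mul_one, one_mul] at h1
    rw [gb_of_gt (Nat.lt_succ_self n), mul_zero] at h2
    rw [S]
    rw [add_zero] at h2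
    rw [← h2, h1]
  have hB : ∑ a ∈ Finset.range (n + 1),
      (-(1 : K)) * ((-1 : K) ^ a * t ^ (a * (a - 1) / 2) * gb n a) * t ^ n
      = (-(t ^ n)) * S n := by
    rw [S, Finset.mul_sum]
    exact Finset.sum_congr rfl (fun a _ => by ring)
  linear_combination hA + hB

lemma S_pos (n : ℕ) : S (n + 1) = 0 := by
  induction n with
  | zero => rw [S_succ]; simp
  | succ m ih => rw [S_succ, ih, mul_zero]

lemma tri (i p q : ℕ) :
    gb (i + p + q) (i + p) * gb (i + p) i = gb (i + p + q) i * gb (p + q) p := by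
  have g1 : gb (i + p + q) (i + p) = qf (i + p + q) / (qf (i + p) * qf q) := gb_eq (i + p) q
  have g2 : gb (i + p) i = qf (i + p) / (qf i * qf p) := gb_eq i p
  have g3 : gb (i + p + q) i = qf (i + p + q) / (qf i * qf (p + q)) := by
    rw [add_assoc]; exact gb_eq i (p + q)
  have g4 : gb (p + q) p = qf (p + q) / (qf p * qf q) := gb_eq p q
  rw [g1, g2, g3, g4]
  have h1 := qf_ne_zero (i + p)
  have h2 := qf_ne_zero q
  have h3 := qf_ne_zero i
  have h4 := qf_ne_zero p
  have h5 := qf_ne_zero (p + q)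
  field_simp

/-- Orthogonality of Gaussian binomial coefficients: for `i ≤ j`,
`∑_{k=i}^{j} (-1)^{k-i} t^{binom(k-i,2)} [j choose k]_t [k choose i]_t = δ_{ij}`. -/
theorem stmt7 (i j : ℕ) (h : i ≤ j) :
    ∑ k ∈ Finset.Icc i j,
        (-1 : K) ^ (k - i) * t ^ ((k - i) * (k - i - 1) / 2) * gb j k * gb k i
      = if i = j then 1 else 0 := by
  obtain ⟨n, rfl⟩ : ∃ n, j = i + n := ⟨j - i, by omega⟩
  rw [← Finset.Ico_add_one_right_eq_Icc, Finset.sum_Ico_eq_sum_range]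
  have hlen : i + n + 1 - i = n + 1 := by omega
  rw [hlen]
  have hterm : ∀ p ∈ Finset.range (n + 1),
      (-1 : K) ^ (i + p - i) * t ^ ((i + p - i) * (i + p - i - 1) / 2) *
        gb (i + n) (i + p) * gb (i + p) i
      = gb (i + n) i * ((-1 : K) ^ p * t ^ (p * (p - 1) / 2) * gb n p) := by
    intro p hp
    have hpn : p ≤ n := by simp at hp; omega
    have hip : i + p - i = p := by omega
    rw [hip]
    have ht : gb (i + n) (i + p) * gb (i + p) i = gb (i + n) i * gb n p := by
      have := tri i p (n - p)
      rwa [show i + p + (n - p) = i + n by omega, show p + (n - p) = n by omega] at this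
    rw [mul_assoc, ht]
    ring
  rw [Finset.sum_congr rfl hterm, ← Finset.mul_sum, show (∑ p ∈ Finset.range (n + 1),
      (-1 : K) ^ p * t ^ (p * (p - 1) / 2) * gb n p) = S n from rfl]
  cases n with
  | zero => simp [S_zero, gb_self]
  | succ m =>
      rw [S_pos, mul_zero, if_neg (by omega)]

end
end
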